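/- arXiv:1309.4684 — 7 statements merged into one kernel-verified Lean document; each statement's English description precedes it below -/
import Mathlib

section
/- Let X be a Banach space, B ⊆ X a closed convex set, and z** an element of the weak* closure of B in X**. Then the following are equivalent: (1) z** does not belong to the (I)-envelope of B; (2) there is a sequence (ξₙ*) in B_{X*} such that sup_{x ∈ B} limsup_{n→∞} ξₙ*(x) < inf_{n ∈ ℕ} z**(ξₙ*); (3) there is a sequence (ξₙ*) in B_{X*} such that sup_{x ∈ B} limsup_{n→∞} ξₙ*(x) < liminf_{n→∞} z**(ξₙ*); (4) there is a sequence (ξₙ*) in B_{X*} such that sup_{x ∈ B} limsup_{n→∞} ξₙ*(x) < limsup_{n→∞} z**(ξₙ*). -/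
open Filter Metric Topology

/-- Measure of weak non-cauchyness of a sequence in the dual:
`δ_w(f) = sup_{F ∈ B_{X**}} inf_n sup_{k,l ≥ n} |F(f k) - F(f l)|`. -/
noncomputable def deltaW {X : Type*} [NormedAddCommGroup X] [NormedSpace ℝ X]
    (f : ℕ → X →L[ℝ] ℝ) : ℝ :=
  ⨆ F : (closedBall (0 : (X →L[ℝ] ℝ) →L[ℝ] ℝ) 1),
    ⨅ n : ℕ, ⨆ p : {p : ℕ × ℕ // n ≤ p.1 ∧ n ≤ p.2},
      |F.1 (f p.1.1) - F.1 (f p.1.2)|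

/-- Measure of weak* non-cauchyness of a sequence in the dual:
`δ_{w*}(f) = sup_{x ∈ B_X} inf_n sup_{k,l ≥ n} |f k x - f l x|`. -/
noncomputable def deltaWStar {X : Type*} [NormedAddCommGroup X] [NormedSpace ℝ X]
    (f : ℕ → X →L[ℝ] ℝ) : ℝ :=
  ⨆ x : (closedBall (0 : X) 1),
    ⨅ n : ℕ, ⨆ p : {p : ℕ × ℕ // n ≤ p.1 ∧ n ≤ p.2},
      |f p.1.1 x.1 - f p.1.2 x.1|

/-- `X` is `c`-Grothendieck if `δ_w(f) ≤ c · δ_{w*}(f)` for every bounded sequence `f` in `X*`. -/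
def IsCGrothendieck (c : ℝ) (X : Type*) [NormedAddCommGroup X] [NormedSpace ℝ X] : Prop :=
  ∀ f : ℕ → X →L[ℝ] ℝ, Bornology.IsBounded (Set.range f) → deltaW f ≤ c * deltaWStar f
/-- The weak* closure of a subset of a dual space. -/
noncomputable def wStarClosure {E : Type*} [NormedAddCommGroup E] [NormedSpace ℝ E]
    (S : Set (E →L[ℝ] ℝ)) : Set (E →L[ℝ] ℝ) :=
  closure (X := WeakDual ℝ E) S

/-- The (I)-envelope of a set `B ⊆ X`, viewed as a subset of the bidual `X**`: the
intersection over all countable decompositions `B = ⋃ n, C n` of the norm closure of the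
convex hull of the union of the weak* closures (in `X**`) of the convex hulls of the `C n`. -/
noncomputable def Ienv {X : Type*} [NormedAddCommGroup X] [NormedSpace ℝ X] (B : Set X) :
    Set ((X →L[ℝ] ℝ) →L[ℝ] ℝ) :=
  ⋂ C ∈ {C : ℕ → Set X | B = ⋃ n, C n},
    closure (convexHull ℝ (⋃ n, wStarClosure
      ((NormedSpace.inclusionInDoubleDual ℝ X) '' (convexHull ℝ (C n)))))

open Set Pointwise



theorem weakdual_dual_eval {E : Type*} [NormedAddCommGroup E] [NormedSpace ℝ E]
    (f : WeakDual ℝ E →L[ℝ] ℝ) : ∃ ξ : E, ∀ F : WeakDual ℝ E, f F = F ξ := by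
  classical
  have hws := LinearMap.weakBilin_withSeminorms (topDualPairing ℝ E)
  have hq : Continuous fun F : WeakDual ℝ E => ‖f F‖ := f.continuous.norm
  obtain ⟨s, C, hC0, hC⟩ := Seminorm.bound_of_continuous hws ((f : WeakDual ℝ E →ₗ[ℝ] ℝ).toSeminorm)
    (by exact hq)
  -- the evaluation functionals
  let e : E →ₗ[ℝ] (WeakDual ℝ E →ₗ[ℝ] ℝ) := (topDualPairing ℝ E).flip
  let L : s → (WeakDual ℝ E →ₗ[ℝ] ℝ) := fun y => e y.1
  have hker : (⨅ i, LinearMap.ker (L i)) ≤ LinearMap.ker (f : WeakDual ℝ E →ₗ[ℝ] ℝ) := by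
    intro F hF
    simp only [Submodule.mem_iInf, LinearMap.mem_ker] at hF ⊢
    have hsup : (s.sup (LinearMap.toSeminormFamily (topDualPairing ℝ E))) F ≤ 0 := by
      apply Seminorm.finset_sup_apply_le le_rfl
      intro y hy
      have : (F : E →L[ℝ] ℝ) y = 0 := hF ⟨y, hy⟩
      change ‖(F : E →L[ℝ] ℝ) y‖ ≤ 0
      simp [topDualPairing_apply, this]
    have := hC F
    simp only [Seminorm.smul_apply, LinearMap.toSeminorm_apply, smul_eq_mul] at this
    have h0 : ‖f F‖ ≤ 0 := le_trans this (by
      have : (C : ℝ) * (s.sup (LinearMap.toSeminormFamily (topDualPairing ℝ E))) F ≤ 0 :=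
        mul_nonpos_of_nonneg_of_nonpos C.coe_nonneg hsup
      exact this)
    simpa using le_antisymm h0 (norm_nonneg _)
  have hf := mem_span_of_iInf_ker_le_ker hker
  have hrange : Submodule.span ℝ (Set.range L) ≤ LinearMap.range e := by
    rw [Submodule.span_le]
    rintro - ⟨y, rfl⟩
    exact ⟨y.1, rfl⟩
  obtain ⟨ξ, hξ⟩ := hrange hf
  exact ⟨ξ, fun F => by
    have := congrArg (fun g : WeakDual ℝ E →ₗ[ℝ] ℝ => g F) hξ
    exact this.symm⟩


theorem isCompact_convexHull_union {V : Type*} [AddCommGroup V] [Module ℝ V]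
    [TopologicalSpace V] [IsTopologicalAddGroup V] [ContinuousSMul ℝ V]
    {K₁ K₂ : Set V} (h₁ : IsCompact K₁) (h₂ : IsCompact K₂)
    (hc₁ : Convex ℝ K₁) (hc₂ : Convex ℝ K₂) :
    IsCompact (convexHull ℝ (K₁ ∪ K₂)) := by
  rcases K₁.eq_empty_or_nonempty with rfl | hne₁
  · simpa [hc₂.convexHull_eq] using h₂
  rcases K₂.eq_empty_or_nonempty with rfl | hne₂
  · simpa [hc₁.convexHull_eq] using h₁
  rw [hc₁.convexHull_union hc₂ hne₁ hne₂]
  -- convexJoin as image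
  have : convexJoin ℝ K₁ K₂ =
      (fun p : ℝ × V × V => (1 - p.1) • p.2.1 + p.1 • p.2.2) '' ((Icc 0 1) ×ˢ K₁ ×ˢ K₂) := by
    ext v
    constructor
    · rintro hv
      rw [mem_convexJoin] at hv
      obtain ⟨x, hx, y, hy, hseg⟩ := hv
      rw [segment_eq_image] at hseg
      obtain ⟨θ, hθ, rfl⟩ := hseg
      exact ⟨(θ, x, y), ⟨hθ, hx, hy⟩, rfl⟩
    · rintro ⟨⟨θ, x, y⟩, ⟨hθ, hx, hy⟩, rfl⟩
      rw [mem_convexJoin]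
      exact ⟨x, hx, y, hy, by rw [segment_eq_image]; exact ⟨θ, hθ, rfl⟩⟩
  rw [this]
  exact ((isCompact_Icc.prod (h₁.prod h₂)).image (by fun_prop))

theorem isCompact_convexHull_biUnion_Iic {V : Type*} [AddCommGroup V] [Module ℝ V]
    [TopologicalSpace V] [IsTopologicalAddGroup V] [ContinuousSMul ℝ V]
    (K : ℕ → Set V) (hK : ∀ i, IsCompact (K i)) (hc : ∀ i, Convex ℝ (K i)) (n : ℕ) :
    IsCompact (convexHull ℝ (⋃ i ∈ Set.Iic n, K i)) := by
  induction n with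
  | zero => simpa [(hc 0).convexHull_eq] using hK 0
  | succ n ih =>
      have : (⋃ i ∈ Set.Iic (n+1), K i) = (⋃ i ∈ Set.Iic n, K i) ∪ K (n+1) := by
        ext v
        simp only [Set.mem_iUnion, Set.mem_Iic, Set.mem_union]
        constructor
        · rintro ⟨i, hi, hv⟩
          rcases Nat.lt_or_ge i (n+1) with h | h
          · exact Or.inl ⟨i, Nat.lt_succ_iff.mp h, hv⟩
          · exact Or.inr (by rw [← le_antisymm hi h]; exact hv)
        · rintro (⟨i, hi, hv⟩ | hv)
          · exact ⟨i, le_trans hi (Nat.le_succ n), hv⟩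
          · exact ⟨n+1, le_rfl, hv⟩
      rw [this, ← convexHull_convexHull_union_left]
      exact isCompact_convexHull_union ih (hK (n+1)) (convex_convexHull ℝ _) (hc (n+1))

theorem quantitative_separation {E : Type*} [NormedAddCommGroup E] [NormedSpace ℝ E]
    (S : Set (E →L[ℝ] ℝ)) (hSc : IsCompact (X := WeakDual ℝ E) S) (hconv : Convex ℝ S)
    (hne : S.Nonempty) (z : E →L[ℝ] ℝ) {ε : ℝ} (hε : 0 < ε)
    (hdist : ∀ w ∈ S, 2*ε ≤ ‖z - w‖) :
    ∃ ξ : E, ‖ξ‖ ≤ 1 ∧ ∀ w ∈ S, w ξ + ε ≤ z ξ := by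
  classical
  haveI : LocallyConvexSpace ℝ (WeakDual ℝ E) := WeakBilin.locallyConvexSpace
  set T : Set (E →L[ℝ] ℝ) := S + closedBall (0 : E →L[ℝ] ℝ) ε with hT
  have hball : IsCompact (X := WeakDual ℝ E) (closedBall (0 : E →L[ℝ] ℝ) ε : Set (E →L[ℝ] ℝ)) :=
    WeakDual.isCompact_closedBall (𝕜 := ℝ) 0 ε
  have hTc : IsCompact (X := WeakDual ℝ E) T := hSc.add hball
  have hTclosed : IsClosed (X := WeakDual ℝ E) T := hTc.isClosed
  have hTconv : Convex ℝ T := hconv.add (convex_closedBall 0 ε)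
  have hzT : z ∉ T := by
    rintro ⟨w, hw, b, hb, rfl⟩
    have h1 := hdist w hw
    rw [add_sub_cancel_left] at h1
    have h2 : ‖b‖ ≤ ε := by simpa using hb
    linarith
  obtain ⟨f, u, hfu, huz⟩ := geometric_hahn_banach_closed_point
    (E := WeakDual ℝ E) hTconv hTclosed hzT
  obtain ⟨ξ₀, hξ₀⟩ := weakdual_dual_eval f
  obtain ⟨w₀, hw₀⟩ := hne
  have hw₀T : w₀ ∈ T := ⟨w₀, hw₀, 0, by simp [hε.le], by simp⟩
  have hne0 : ξ₀ ≠ 0 := by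
    rintro rfl
    have h1 := hfu _ hw₀T
    have h2 := huz
    replace h1 : w₀ 0 < u := (hξ₀ w₀).symm.trans_lt h1
    replace h2 : u < z 0 := h2.trans_eq (hξ₀ z)
    simp only [map_zero] at h1 h2
    linarith
  obtain ⟨g, hg1, hgξ⟩ := exists_dual_vector ℝ ξ₀ (norm_ne_zero_iff.mpr hne0)
  have key : ∀ w ∈ S, w ξ₀ + ε * ‖ξ₀‖ < z ξ₀ := by
    intro w hw
    have hmem : w + ε • g ∈ T := ⟨w, hw, ε • g, by
      rw [mem_closedBall, dist_zero_right]
      rw [show ‖ε • g‖ = ε * ‖g‖ from norm_smul_of_nonneg hε.le g, hg1, mul_one], rfl⟩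
    have h1 := hfu _ hmem
    have h2 := huz
    replace h1 : (w + ε • g) ξ₀ < u := (hξ₀ _).symm.trans_lt h1
    replace h2 : u < z ξ₀ := h2.trans_eq (hξ₀ z)
    have : (w + ε • g) ξ₀ = w ξ₀ + ε * ‖ξ₀‖ := by
      simp [ContinuousLinearMap.add_apply, ContinuousLinearMap.smul_apply, hgξ]
    rw [this] at h1
    calc w ξ₀ + ε * ‖ξ₀‖ < u := h1
    _ < z ξ₀ := h2
  have hξ₀pos : 0 < ‖ξ₀‖ := norm_pos_iff.mpr hne0
  refine ⟨‖ξ₀‖⁻¹ • ξ₀, by simp [norm_smul, abs_of_pos (inv_pos.mpr hξ₀pos),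
    inv_mul_cancel₀ hξ₀pos.ne'], fun w hw => ?_⟩
  have h := (key w hw).le
  have := mul_le_mul_of_nonneg_left h (inv_pos.mpr hξ₀pos).le
  rw [mul_add] at this
  calc w (‖ξ₀‖⁻¹ • ξ₀) + ε = ‖ξ₀‖⁻¹ * w ξ₀ + ε := by rw [map_smul]; simp
    _ ≤ ‖ξ₀‖⁻¹ * z ξ₀ := by
        have hε' : ‖ξ₀‖⁻¹ * (ε * ‖ξ₀‖) = ε := by field_simp
        linarith [this, hε' ▸ this]
    _ = z (‖ξ₀‖⁻¹ • ξ₀) := by rw [map_smul]; simp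

lemma wStarClosure_mono {E : Type*} [NormedAddCommGroup E] [NormedSpace ℝ E]
    {S T : Set (E →L[ℝ] ℝ)} (h : S ⊆ T) : wStarClosure S ⊆ wStarClosure T :=
  closure_mono (X := WeakDual ℝ E) h

lemma subset_wStarClosure {E : Type*} [NormedAddCommGroup E] [NormedSpace ℝ E]
    (S : Set (E →L[ℝ] ℝ)) : S ⊆ wStarClosure S :=
  subset_closure (X := WeakDual ℝ E)

lemma wStarClosure_singleton {E : Type*} [NormedAddCommGroup E] [NormedSpace ℝ E]
    (f : E →L[ℝ] ℝ) : wStarClosure {f} = {f} :=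
  closure_singleton (X := WeakDual ℝ E)

set_option maxHeartbeats 2000000 in
/-- Kalenda's characterization of the (I)-envelope. For a closed convex set `B ⊆ X` and
`z ∈ X**` in the weak* closure of `B`, the following are equivalent: (1) `z ∉ (I)-env(B)`;
(2) there is a sequence `(ξ n)` in `B_{X*}` with `sup_{x ∈ B} limsup ξ n x < inf_n z (ξ n)`;
(3) likewise with `liminf_n z (ξ n)`; (4) likewise with `limsup_n z (ξ n)`. The strict
inequality `sup_{x ∈ B} limsup_n (ξ n x) < α` is expressed by an intermediate real bound `r`. -/
theorem notMem_ienv_tfae {X : Type*} [NormedAddCommGroup X] [NormedSpace ℝ X] [CompleteSpace X]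
    (B : Set X) (hBclosed : IsClosed B) (hBconv : Convex ℝ B)
    (z : (X →L[ℝ] ℝ) →L[ℝ] ℝ)
    (hz : z ∈ wStarClosure ((NormedSpace.inclusionInDoubleDual ℝ X) '' B)) :
    List.TFAE
      [ z ∉ Ienv B,
        ∃ ξ : ℕ → X →L[ℝ] ℝ, (∀ n, ‖ξ n‖ ≤ 1) ∧
          ∃ r : ℝ, (∀ x ∈ B, Filter.limsup (fun n => ξ n x) Filter.atTop ≤ r) ∧
            r < ⨅ n : ℕ, z (ξ n),
        ∃ ξ : ℕ → X →L[ℝ] ℝ, (∀ n, ‖ξ n‖ ≤ 1) ∧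
          ∃ r : ℝ, (∀ x ∈ B, Filter.limsup (fun n => ξ n x) Filter.atTop ≤ r) ∧
            r < Filter.liminf (fun n => z (ξ n)) Filter.atTop,
        ∃ ξ : ℕ → X →L[ℝ] ℝ, (∀ n, ‖ξ n‖ ≤ 1) ∧
          ∃ r : ℝ, (∀ x ∈ B, Filter.limsup (fun n => ξ n x) Filter.atTop ≤ r) ∧
            r < Filter.limsup (fun n => z (ξ n)) Filter.atTop ] := by
  classical
  have hzb : ∀ (ξ : ℕ → X →L[ℝ] ℝ), (∀ n, ‖ξ n‖ ≤ 1) → ∀ n, |z (ξ n)| ≤ ‖z‖ := by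
    intro ξ hξ n
    calc |z (ξ n)| ≤ ‖z‖ * ‖ξ n‖ := z.le_opNorm _
      _ ≤ ‖z‖ * 1 := by gcongr; exact hξ n
      _ = ‖z‖ := mul_one _
  tfae_have 2 → 3 := by
    rintro ⟨ξ, hξ, r, hr, hrα⟩
    refine ⟨ξ, hξ, r, hr, lt_of_lt_of_le hrα ?_⟩
    refine le_liminf_of_le ?_ (Eventually.of_forall fun n => ?_)
    · exact IsBoundedUnder.isCoboundedUnder_ge
        (isBoundedUnder_of ⟨‖z‖, fun n => (abs_le.mp (hzb ξ hξ n)).2⟩)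
    · exact ciInf_le ⟨-‖z‖, by rintro - ⟨m, rfl⟩; exact (abs_le.mp (hzb ξ hξ m)).1⟩ n
  tfae_have 3 → 4 := by
    rintro ⟨ξ, hξ, r, hr, hrα⟩
    refine ⟨ξ, hξ, r, hr, lt_of_lt_of_le hrα (liminf_le_limsup ?_ ?_)⟩
    · exact isBoundedUnder_of ⟨‖z‖, fun n => (abs_le.mp (hzb ξ hξ n)).2⟩
    · exact isBoundedUnder_of ⟨-‖z‖, fun n => (abs_le.mp (hzb ξ hξ n)).1⟩
  tfae_have 4 → 2 := by
    rintro ⟨ξ, hξ, r, hr, hrα⟩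
    set L := Filter.limsup (fun n => z (ξ n)) Filter.atTop with hL
    have hfreq : ∃ᶠ n in atTop, (r + L)/2 < z (ξ n) := by
      refine frequently_lt_of_lt_limsup ?_ (by simpa [hL] using by linarith)
      exact IsBoundedUnder.isCoboundedUnder_le
        (isBoundedUnder_of ⟨-‖z‖, fun n => (abs_le.mp (hzb ξ hξ n)).1⟩)
    obtain ⟨φ, hφmono, hφ⟩ := extraction_of_frequently_atTop hfreq
    refine ⟨ξ ∘ φ, fun n => hξ (φ n), r, fun x hx => ?_, ?_⟩
    · have h1 : Filter.limsup (fun n => ξ n x) (map φ atTop) ≤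
          Filter.limsup (fun n => ξ n x) atTop := by
        refine limsup_le_limsup_of_le hφmono.tendsto_atTop ?_ ?_
        · refine IsBoundedUnder.isCoboundedUnder_le (isBoundedUnder_of ⟨-‖x‖, fun n => ?_⟩)
          have h2 : |ξ n x| ≤ ‖x‖ := by
            calc |ξ n x| ≤ ‖ξ n‖ * ‖x‖ := (ξ n).le_opNorm x
              _ ≤ 1 * ‖x‖ := by gcongr; exact hξ n
              _ = ‖x‖ := one_mul _
          exact (abs_le.mp h2).1
        · refine isBoundedUnder_of ⟨‖x‖, fun n => ?_⟩
          have h2 : |ξ n x| ≤ ‖x‖ := by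
            calc |ξ n x| ≤ ‖ξ n‖ * ‖x‖ := (ξ n).le_opNorm x
              _ ≤ 1 * ‖x‖ := by gcongr; exact hξ n
              _ = ‖x‖ := one_mul _
          exact (abs_le.mp h2).2
      have h0 : Filter.limsup (fun n => ξ (φ n) x) atTop =
          Filter.limsup (fun n => ξ n x) (map φ atTop) :=
        limsup_comp (fun n => ξ n x) φ atTop
      calc Filter.limsup (fun n => ξ (φ n) x) atTop
          ≤ Filter.limsup (fun n => ξ n x) atTop := h0 ▸ h1
        _ ≤ r := hr x hx
    · have : (r + L)/2 ≤ ⨅ n, z (ξ (φ n)) := le_ciInf fun n => (hφ n).le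
      have hrL : r < (r + L)/2 := by linarith
      exact lt_of_lt_of_le hrL this
  tfae_have 2 → 1 := by
    rintro ⟨ξ, hξ, r, hr, hrα⟩
    set J := NormedSpace.inclusionInDoubleDual ℝ X with hJ
    set α := ⨅ n, z (ξ n) with hα
    set r' := (r + α)/2 with hr'
    have hrr' : r < r' := by rw [hr']; linarith
    have hr'α : r' < α := by rw [hr']; linarith
    have hξx : ∀ (x : X) (n : ℕ), |ξ n x| ≤ ‖x‖ := by
      intro x n
      calc |ξ n x| ≤ ‖ξ n‖ * ‖x‖ := (ξ n).le_opNorm x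
        _ ≤ 1 * ‖x‖ := by gcongr; exact hξ n
        _ = ‖x‖ := one_mul _
    set C : ℕ → Set X := fun n => {x | x ∈ B ∧ ∀ k, n ≤ k → ξ k x ≤ r'} with hC
    have hBU : B = ⋃ n, C n := by
      apply subset_antisymm
      · intro x hx
        have hev : ∀ᶠ k in atTop, ξ k x < r' :=
          eventually_lt_of_limsup_lt (lt_of_le_of_lt (hr x hx) hrr')
            (isBoundedUnder_of ⟨‖x‖, fun n => (abs_le.mp (hξx x n)).2⟩)
        obtain ⟨N, hN⟩ := eventually_atTop.mp hev
        exact Set.mem_iUnion.mpr ⟨N, hx, fun k hk => (hN k hk).le⟩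
      · exact Set.iUnion_subset fun n x hx => hx.1
    intro hmem
    have hzM : z ∈ closure (convexHull ℝ (⋃ n, wStarClosure
        (J '' (convexHull ℝ (C n))))) := by
      have := Set.mem_iInter₂.mp hmem C hBU
      exact this
    set Sconv : Set ((X →L[ℝ] ℝ) →L[ℝ] ℝ) := {F | ∃ N, ∀ k, N ≤ k → F (ξ k) ≤ r'} with hS
    have hconvS : Convex ℝ Sconv := by
      rintro F hF G hG a b ha hb hab
      obtain ⟨N₁, h₁⟩ := hF
      obtain ⟨N₂, h₂⟩ := hG
      refine ⟨max N₁ N₂, fun k hk => ?_⟩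
      have e : (a • F + b • G) (ξ k) = a * F (ξ k) + b * G (ξ k) := by simp
      rw [e]
      calc a * F (ξ k) + b * G (ξ k) ≤ a * r' + b * r' :=
            add_le_add (mul_le_mul_of_nonneg_left (h₁ k (le_trans (le_max_left _ _) hk)) ha)
              (mul_le_mul_of_nonneg_left (h₂ k (le_trans (le_max_right _ _) hk)) hb)
        _ = r' := by rw [← add_mul, hab, one_mul]
    have hsub : (⋃ n, wStarClosure (J '' (convexHull ℝ (C n)))) ⊆ Sconv := by
      intro F hF
      rw [Set.mem_iUnion] at hF
      obtain ⟨n, hF⟩ := hF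
      refine ⟨n, fun k hk => ?_⟩
      have hclosed : IsClosed (X := WeakDual ℝ (X →L[ℝ] ℝ))
          {F : (X →L[ℝ] ℝ) →L[ℝ] ℝ | F (ξ k) ≤ r'} := by
        have : Continuous fun F : WeakDual ℝ (X →L[ℝ] ℝ) => F (ξ k) :=
          WeakDual.eval_continuous (ξ k)
        exact IsClosed.preimage this isClosed_Iic
      have hsub2 : J '' (convexHull ℝ (C n)) ⊆
          {F : (X →L[ℝ] ℝ) →L[ℝ] ℝ | F (ξ k) ≤ r'} := by
        rintro - ⟨x, hx, rfl⟩
        have hxin : x ∈ {y : X | ξ k y ≤ r'} :=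
          convexHull_min (fun y hy => hy.2 k hk)
            (convex_halfSpace_le (LinearMap.isLinear ((ξ k) : X →ₗ[ℝ] ℝ)) r') hx
        simpa [hJ, NormedSpace.dual_def] using hxin
      exact closure_minimal (s := ((J '' (convexHull ℝ (C n))) :
        Set (WeakDual ℝ (X →L[ℝ] ℝ)))) hsub2 hclosed hF
    have hhull : convexHull ℝ (⋃ n, wStarClosure (J '' (convexHull ℝ (C n)))) ⊆ Sconv :=
      convexHull_min hsub hconvS
    have hd : (0:ℝ) < α - r' := by linarith
    obtain ⟨G, hG, hdistG⟩ := Metric.mem_closure_iff.mp hzM (α - r') hd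
    obtain ⟨N, hN⟩ := hhull hG
    have hzG : z (ξ N) - G (ξ N) ≤ ‖z - G‖ := by
      have h1 : |(z - G) (ξ N)| ≤ ‖z - G‖ * ‖ξ N‖ := (z - G).le_opNorm (ξ N)
      have h2 : ‖z - G‖ * ‖ξ N‖ ≤ ‖z - G‖ := by
        calc ‖z - G‖ * ‖ξ N‖ ≤ ‖z - G‖ * 1 := by gcongr; exact hξ N
          _ = ‖z - G‖ := mul_one _
      have h3 : (z - G) (ξ N) = z (ξ N) - G (ξ N) := by simp
      linarith [(abs_le.mp (le_trans h1 h2)).2, h3 ▸ (abs_le.mp (le_trans h1 h2)).2]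
    have hαN : α ≤ z (ξ N) :=
      ciInf_le ⟨-‖z‖, by rintro - ⟨m, rfl⟩; exact (abs_le.mp (hzb ξ hξ m)).1⟩ N
    have hGN : G (ξ N) ≤ r' := hN N le_rfl
    rw [dist_eq_norm] at hdistG
    linarith
  tfae_have 1 → 4 := by
    intro h1
    set J := NormedSpace.inclusionInDoubleDual ℝ X with hJ
    have h1' : ¬ ∀ C : ℕ → Set X, B = (⋃ n, C n) → z ∈ closure (convexHull ℝ
        (⋃ n, wStarClosure (J '' (convexHull ℝ (C n))))) := by
      intro hall
      exact h1 (Set.mem_iInter₂.mpr fun C hC => hall C hC)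
    push_neg at h1'
    obtain ⟨C, hdec, hzC⟩ := h1'
    have hBne : B.Nonempty := by
      have h2 : (closure (X := WeakDual ℝ (X →L[ℝ] ℝ)) (J '' B)).Nonempty := ⟨z, hz⟩
      have h3 := closure_nonempty_iff.mp h2
      exact Set.image_nonempty.mp h3
    obtain ⟨x₀, hx₀⟩ := hBne
    set C' : ℕ → Set X := fun k =>
      if (C (Nat.unpair k).1 ∩ closedBall (0:X) ((Nat.unpair k).2)).Nonempty
      then C (Nat.unpair k).1 ∩ closedBall (0:X) ((Nat.unpair k).2) else {x₀} with hC'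
    have hC'B : ∀ k, C' k ⊆ B := by
      intro k
      simp only [hC']
      split_ifs with h
      · intro y hy
        have : y ∈ C (Nat.unpair k).1 := hy.1
        rw [hdec]
        exact Set.mem_iUnion.mpr ⟨_, this⟩
      · intro y hy
        rw [Set.mem_singleton_iff] at hy
        rwa [hy]
    have hC'ne : ∀ k, (C' k).Nonempty := by
      intro k
      simp only [hC']
      split_ifs with h
      · exact h
      · exact ⟨x₀, rfl⟩
    have hBU' : B = ⋃ k, C' k := by
      apply subset_antisymm
      · intro x hx
        obtain ⟨n, hn⟩ := Set.mem_iUnion.mp (hdec ▸ hx)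
        set m := ⌈‖x‖⌉₊ with hm
        have hxm : x ∈ C n ∩ closedBall (0:X) m := by
          refine ⟨hn, ?_⟩
          rw [mem_closedBall, dist_zero_right]
          exact Nat.le_ceil _
        refine Set.mem_iUnion.mpr ⟨Nat.pair n m, ?_⟩
        simp only [hC', Nat.unpair_pair]
        rw [if_pos ⟨x, hxm⟩]
        exact hxm
      · exact Set.iUnion_subset hC'B
    set F' : ℕ → Set ((X →L[ℝ] ℝ) →L[ℝ] ℝ) :=
      fun k => wStarClosure (J '' (convexHull ℝ (C' k))) with hF'
    -- each F' k is contained in the big convex hull for the original decomposition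
    have hsubM : (⋃ k, F' k) ⊆ convexHull ℝ (⋃ n, wStarClosure
        (J '' (convexHull ℝ (C n)))) := by
      refine Set.iUnion_subset fun k => ?_
      simp only [hF', hC']
      split_ifs with h
      · refine subset_trans ?_ (subset_convexHull ℝ _)
        refine subset_trans ?_ (Set.subset_iUnion _ (Nat.unpair k).1)
        exact wStarClosure_mono (Set.image_mono (convexHull_mono Set.inter_subset_left))
      · obtain ⟨n₀, hn₀⟩ := Set.mem_iUnion.mp (hdec ▸ hx₀)
        have h2 : wStarClosure (J '' (convexHull ℝ ({x₀} : Set X))) = {J x₀} := by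
          rw [convexHull_singleton, Set.image_singleton]
          exact wStarClosure_singleton _
        rw [h2]
        refine subset_trans ?_ (subset_convexHull ℝ _)
        refine subset_trans ?_ (Set.subset_iUnion _ n₀)
        intro w hw
        rw [Set.mem_singleton_iff] at hw
        rw [hw]
        exact subset_wStarClosure _ ⟨x₀, subset_convexHull ℝ _ hn₀, rfl⟩
    have hzM' : z ∉ closure (convexHull ℝ (⋃ k, F' k)) := by
      intro hmem
      exact hzC (closure_mono (convexHull_min hsubM (convex_convexHull ℝ _)) hmem)
    -- J x₀ is in the hull
    obtain ⟨k₀, hk₀⟩ := Set.mem_iUnion.mp (hBU' ▸ hx₀)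
    have hJmemF' : ∀ (x : X) (k : ℕ), x ∈ C' k → J x ∈ F' k := by
      intro x k hxk
      exact subset_wStarClosure _ ⟨x, subset_convexHull ℝ _ hxk, rfl⟩
    have hhullne : (convexHull ℝ (⋃ k, F' k)).Nonempty :=
      ⟨J x₀, subset_convexHull ℝ _ (Set.mem_iUnion.mpr ⟨k₀, hJmemF' x₀ k₀ hk₀⟩)⟩
    set d := infDist z (convexHull ℝ (⋃ k, F' k)) with hd
    have hdpos : 0 < d := by
      have h2 : z ∉ closure (convexHull ℝ (⋃ k, F' k)) := hzM'
      have h3 := (IsClosed.notMem_iff_infDist_pos (isClosed_closure (s := convexHull ℝ (⋃ k, F' k)))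
        hhullne.closure).mp h2
      rwa [Metric.infDist_closure] at h3
    set ε := d/2 with hε'
    have hε : 0 < ε := by rw [hε']; linarith
    -- convexity and compactness of the pieces
    have hF'conv : ∀ k, Convex ℝ (F' k) := by
      intro k
      have himg : Convex ℝ (J '' (convexHull ℝ (C' k))) :=
        (convex_convexHull ℝ (C' k)).is_linear_image ⟨J.map_add, J.map_smul⟩
      exact Convex.closure (E := WeakDual ℝ (X →L[ℝ] ℝ)) himg
    have hF'cpt : ∀ k, IsCompact (X := WeakDual ℝ (X →L[ℝ] ℝ)) (F' k) := by
      intro k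
      set R := max (((Nat.unpair k).2 : ℝ)) ‖x₀‖ with hR
      have hCball : C' k ⊆ closedBall (0:X) R := by
        simp only [hC']
        split_ifs with h
        · refine subset_trans Set.inter_subset_right ?_
          exact closedBall_subset_closedBall (le_max_left _ _)
        · intro y hy
          rw [Set.mem_singleton_iff] at hy
          rw [hy, mem_closedBall, dist_zero_right]
          exact le_max_right _ _
      have hhull2 : convexHull ℝ (C' k) ⊆ closedBall (0:X) R :=
        convexHull_min hCball (convex_closedBall 0 R)
      have himg : J '' (convexHull ℝ (C' k)) ⊆
          closedBall (0:(X →L[ℝ] ℝ) →L[ℝ] ℝ) R := by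
        rintro - ⟨x, hx, rfl⟩
        rw [mem_closedBall, @dist_zero_right ((X →L[ℝ] ℝ) →L[ℝ] ℝ) _ (J x)]
        calc ‖J x‖ ≤ ‖x‖ := NormedSpace.double_dual_bound ℝ X x
          _ ≤ R := by
              have := hhull2 hx
              rwa [mem_closedBall, dist_zero_right] at this
      have hclosedball : IsClosed (X := WeakDual ℝ (X →L[ℝ] ℝ))
          (closedBall (0:(X →L[ℝ] ℝ) →L[ℝ] ℝ) R : Set ((X →L[ℝ] ℝ) →L[ℝ] ℝ)) :=
        WeakDual.isClosed_closedBall 0 R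
      have hsub3 : F' k ⊆ closedBall (0:(X →L[ℝ] ℝ) →L[ℝ] ℝ) R :=
        closure_minimal (s := ((J '' (convexHull ℝ (C' k))) :
          Set (WeakDual ℝ (X →L[ℝ] ℝ)))) himg hclosedball
      exact IsCompact.of_isClosed_subset (WeakDual.isCompact_closedBall (𝕜 := ℝ) 0 R)
        (isClosed_closure (X := WeakDual ℝ (X →L[ℝ] ℝ))) hsub3
    -- the sets D n
    set D : ℕ → Set ((X →L[ℝ] ℝ) →L[ℝ] ℝ) :=
      fun n => convexHull ℝ (⋃ i ∈ Set.Iic n, F' i) with hD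
    have hDcpt : ∀ n, IsCompact (X := WeakDual ℝ (X →L[ℝ] ℝ)) (D n) := fun n =>
      isCompact_convexHull_biUnion_Iic (V := WeakDual ℝ (X →L[ℝ] ℝ)) F' hF'cpt (fun k => by exact hF'conv k) n
    have hDconv : ∀ n, Convex ℝ (D n) := fun n => convex_convexHull ℝ _
    have hDne : ∀ n, (D n).Nonempty := by
      intro n
      obtain ⟨y, hy⟩ := hC'ne 0
      exact ⟨J y, subset_convexHull ℝ _ (Set.mem_biUnion (Set.mem_Iic.mpr (Nat.zero_le n))
        (hJmemF' y 0 hy))⟩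
    have hDsub : ∀ n, D n ⊆ convexHull ℝ (⋃ k, F' k) := by
      intro n
      refine convexHull_min ?_ (convex_convexHull ℝ _)
      refine Set.iUnion₂_subset fun i _ => ?_
      exact subset_trans (Set.subset_iUnion _ i) (subset_convexHull ℝ _)
    have hDdist : ∀ n, ∀ w ∈ D n, 2*ε ≤ ‖z - w‖ := by
      intro n w hw
      have h2 : d ≤ dist z w := Metric.infDist_le_dist_of_mem (hDsub n hw)
      calc 2*ε = d := by rw [hε']; ring
        _ ≤ dist z w := h2
        _ = ‖z - w‖ := dist_eq_norm z w
    choose ξ hξ1 hξ2 using fun n =>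
      quantitative_separation (D n) (hDcpt n) (hDconv n) (hDne n) z hε (hDdist n)
    refine ⟨ξ, hξ1, Filter.limsup (fun n => z (ξ n)) Filter.atTop - ε, ?_, by linarith⟩
    intro x hx
    obtain ⟨m, hm⟩ := Set.mem_iUnion.mp (hBU' ▸ hx)
    have hξx : ∀ (n : ℕ), |ξ n x| ≤ ‖x‖ := by
      intro n
      calc |ξ n x| ≤ ‖ξ n‖ * ‖x‖ := (ξ n).le_opNorm x
        _ ≤ 1 * ‖x‖ := by gcongr; exact hξ1 n
        _ = ‖x‖ := one_mul _
    have hkey : ∀ n, m ≤ n → ξ n x ≤ z (ξ n) - ε := by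
      intro n hn
      have hJx : J x ∈ D n := subset_convexHull ℝ _
        (Set.mem_biUnion (Set.mem_Iic.mpr hn) (hJmemF' x m hm))
      have h2 := hξ2 n (J x) hJx
      have h3 : (J x) (ξ n) = ξ n x := NormedSpace.dual_def ℝ X x (ξ n)
      rw [h3] at h2
      linarith
    have hstep : Filter.limsup (fun n => ξ n x) Filter.atTop ≤
        Filter.limsup (fun n => z (ξ n) - ε) Filter.atTop := by
      refine limsup_le_limsup (eventually_atTop.mpr ⟨m, hkey⟩) ?_ ?_
      · exact IsBoundedUnder.isCoboundedUnder_le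
          (isBoundedUnder_of ⟨-‖x‖, fun n => (abs_le.mp (hξx n)).1⟩)
      · exact isBoundedUnder_of ⟨‖z‖ - ε, fun n => by
          have := (abs_le.mp (hzb ξ hξ1 n)).2; linarith⟩
    have heq : Filter.limsup (fun n => z (ξ n) - ε) Filter.atTop =
        Filter.limsup (fun n => z (ξ n)) Filter.atTop - ε := by
      refine limsup_sub_const Filter.atTop (fun n => z (ξ n)) ε ?_ ?_
      · exact isBoundedUnder_of ⟨‖z‖, fun n => (abs_le.mp (hzb ξ hξ1 n)).2⟩
      · exact IsBoundedUnder.isCoboundedUnder_le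
          (isBoundedUnder_of ⟨-‖z‖, fun n => (abs_le.mp (hzb ξ hξ1 n)).1⟩)
    rw [heq] at hstep
    exact hstep
  tfae_finish
end

section
/- Let X be a Banach space and c ≥ 1. Then X is c-Grothendieck if and only if the (I)-envelope of the closed unit ball B_X contains (1/c)·B_{X**}. -/
open Filter Metric Topology Pointwise

/-! ### Auxiliary real-analysis lemmas about oscillations -/

noncomputable def oscSup (φ : ℕ → ℝ) (n : ℕ) : ℝ :=
  ⨆ p : {p : ℕ × ℕ // n ≤ p.1 ∧ n ≤ p.2}, |φ p.1.1 - φ p.1.2|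

noncomputable def oscInf (φ : ℕ → ℝ) : ℝ := ⨅ n : ℕ, oscSup φ n

instance oscPairNonempty (n : ℕ) : Nonempty {p : ℕ × ℕ // n ≤ p.1 ∧ n ≤ p.2} :=
  ⟨⟨(n, n), le_rfl, le_rfl⟩⟩

lemma oscSup_le {φ : ℕ → ℝ} {n : ℕ} {a : ℝ}
    (h : ∀ k l, n ≤ k → n ≤ l → |φ k - φ l| ≤ a) : oscSup φ n ≤ a :=
  ciSup_le fun p => h p.1.1 p.1.2 p.2.1 p.2.2

lemma bddAbove_osc {φ : ℕ → ℝ} {m : ℝ} (hm : ∀ k, |φ k| ≤ m) (n : ℕ) :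
    BddAbove (Set.range fun p : {p : ℕ × ℕ // n ≤ p.1 ∧ n ≤ p.2} => |φ p.1.1 - φ p.1.2|) := by
  refine ⟨2 * m, ?_⟩
  rintro x ⟨p, rfl⟩
  linarith [hm p.1.1, hm p.1.2, abs_sub (φ p.1.1) (φ p.1.2)]

lemma le_oscSup {φ : ℕ → ℝ} {m : ℝ} (hm : ∀ k, |φ k| ≤ m) {n k l : ℕ}
    (hk : n ≤ k) (hl : n ≤ l) : |φ k - φ l| ≤ oscSup φ n :=
  le_ciSup (bddAbove_osc hm n) (⟨(k, l), hk, hl⟩ : {p : ℕ × ℕ // n ≤ p.1 ∧ n ≤ p.2})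

lemma oscSup_nonneg {φ : ℕ → ℝ} {m : ℝ} (hm : ∀ k, |φ k| ≤ m) (n : ℕ) :
    0 ≤ oscSup φ n := by
  have := le_oscSup hm (le_refl n) (le_refl n)
  simpa using this

lemma oscInf_le_oscSup {φ : ℕ → ℝ} {m : ℝ} (hm : ∀ k, |φ k| ≤ m) (n : ℕ) :
    oscInf φ ≤ oscSup φ n :=
  ciInf_le ⟨0, by rintro x ⟨n, rfl⟩; exact oscSup_nonneg hm n⟩ n

lemma oscInf_le {φ : ℕ → ℝ} {m a : ℝ} (hm : ∀ k, |φ k| ≤ m)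
    (h : ∃ n, ∀ k l, n ≤ k → n ≤ l → |φ k - φ l| ≤ a) : oscInf φ ≤ a := by
  obtain ⟨n, hn⟩ := h
  exact (oscInf_le_oscSup hm n).trans (oscSup_le hn)

lemma oscInf_le_two_mul {φ : ℕ → ℝ} {m : ℝ} (hm : ∀ k, |φ k| ≤ m) : oscInf φ ≤ 2 * m := by
  refine oscInf_le hm ⟨0, fun k l _ _ => ?_⟩
  linarith [hm k, hm l, abs_sub (φ k) (φ l)]

lemma le_oscInf {φ : ℕ → ℝ} {a : ℝ} (h : ∀ n, a ≤ oscSup φ n) : a ≤ oscInf φ :=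
  le_ciInf h

lemma le_of_forall_pos_le_add' {a b : ℝ} (h : ∀ ε > 0, a ≤ b + ε) : a ≤ b := by
  by_contra hlt
  push_neg at hlt
  have := h ((a - b) / 2) (by linarith)
  linarith

/-! ### Bridging lemmas for `deltaW` and `deltaWStar` -/

section DW
variable {X : Type*} [NormedAddCommGroup X] [NormedSpace ℝ X] {f : ℕ → X →L[ℝ] ℝ}

lemma ddual_mem_closedBall_iff (G : (X →L[ℝ] ℝ) →L[ℝ] ℝ) (r : ℝ) :
    G ∈ closedBall (0 : (X →L[ℝ] ℝ) →L[ℝ] ℝ) r ↔ ‖G‖ ≤ r := by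
  have h1 : G ∈ closedBall (0 : (X →L[ℝ] ℝ) →L[ℝ] ℝ) r ↔ dist G 0 ≤ r := Iff.rfl
  have h2 : dist G 0 = ‖G‖ := dist_zero_right G
  rw [h1, h2]

lemma ddual_convex_closedBall (r : ℝ) :
    Convex ℝ (closedBall (0 : (X →L[ℝ] ℝ) →L[ℝ] ℝ) r) := by
  have h : closedBall (0 : (X →L[ℝ] ℝ) →L[ℝ] ℝ) r = {G | ‖G‖ ≤ r} :=
    Set.ext fun G => ddual_mem_closedBall_iff G r
  rw [h]
  intro a ha b hb s t hs ht hst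
  simp only [Set.mem_setOf_eq] at ha hb ⊢
  have h1 : ‖s • a‖ ≤ s * ‖a‖ := by
    have := ContinuousLinearMap.opNorm_smul_le s a
    rwa [Real.norm_eq_abs, abs_of_nonneg hs] at this
  have h2 : ‖t • b‖ ≤ t * ‖b‖ := by
    have := ContinuousLinearMap.opNorm_smul_le t b
    rwa [Real.norm_eq_abs, abs_of_nonneg ht] at this
  calc ‖s • a + t • b‖ ≤ ‖s • a‖ + ‖t • b‖ := ContinuousLinearMap.opNorm_add_le _ _
    _ ≤ s * ‖a‖ + t * ‖b‖ := add_le_add h1 h2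
    _ ≤ s * r + t * r := add_le_add (mul_le_mul_of_nonneg_left ha hs)
        (mul_le_mul_of_nonneg_left hb ht)
    _ = r := by rw [← add_mul, hst, one_mul]

lemma deltaW_eq (f : ℕ → X →L[ℝ] ℝ) :
    deltaW f = ⨆ F : (closedBall (0 : (X →L[ℝ] ℝ) →L[ℝ] ℝ) 1), oscInf fun k => F.1 (f k) := rfl

lemma deltaWStar_eq (f : ℕ → X →L[ℝ] ℝ) :
    deltaWStar f = ⨆ x : (closedBall (0 : X) 1), oscInf fun k => f k x.1 := rfl

instance : Nonempty (closedBall (0 : (X →L[ℝ] ℝ) →L[ℝ] ℝ) 1) :=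
  ⟨⟨0, mem_closedBall_self zero_le_one⟩⟩

instance : Nonempty (closedBall (0 : X) 1) :=
  ⟨⟨0, mem_closedBall_self zero_le_one⟩⟩

lemma deltaW_le {a : ℝ}
    (h : ∀ F : (X →L[ℝ] ℝ) →L[ℝ] ℝ, F ∈ closedBall 0 1 → oscInf (fun k => F (f k)) ≤ a) :
    deltaW f ≤ a := by
  rw [deltaW_eq]
  exact ciSup_le fun F => h F.1 F.2

lemma le_deltaW {M : ℝ} (hM : ∀ k, ‖f k‖ ≤ M) {F : (X →L[ℝ] ℝ) →L[ℝ] ℝ}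
    (hF : F ∈ closedBall (0 : (X →L[ℝ] ℝ) →L[ℝ] ℝ) 1) :
    oscInf (fun k => F (f k)) ≤ deltaW f := by
  rw [deltaW_eq]
  refine le_ciSup (f := fun F : (closedBall (0 : (X →L[ℝ] ℝ) →L[ℝ] ℝ) 1) =>
    oscInf fun k => F.1 (f k)) ⟨2 * M, ?_⟩ (⟨F, hF⟩ : (closedBall (0 : (X →L[ℝ] ℝ) →L[ℝ] ℝ) 1))
  rintro x ⟨G, rfl⟩
  refine oscInf_le_two_mul fun k => ?_
  have h1 : ‖G.1 (f k)‖ ≤ ‖G.1‖ * ‖f k‖ := ContinuousLinearMap.le_opNorm _ _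
  have h2 : ‖G.1‖ ≤ 1 := (ddual_mem_closedBall_iff G.1 1).mp G.2
  have h3 : ‖f k‖ ≤ M := hM k
  have hM0 : 0 ≤ M := le_trans (norm_nonneg _) h3
  calc |G.1 (f k)| = ‖G.1 (f k)‖ := (Real.norm_eq_abs _).symm
    _ ≤ ‖G.1‖ * ‖f k‖ := h1
    _ ≤ 1 * M := mul_le_mul h2 h3 (norm_nonneg _) zero_le_one
    _ = M := one_mul M

lemma oscInf_le_deltaWStar {M : ℝ} (hM : ∀ k, ‖f k‖ ≤ M) {x : X}
    (hx : x ∈ closedBall (0 : X) 1) :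
    oscInf (fun k => f k x) ≤ deltaWStar f := by
  rw [deltaWStar_eq]
  refine le_ciSup (f := fun x : (closedBall (0 : X) 1) => oscInf fun k => f k x.1)
    ⟨2 * M, ?_⟩ (⟨x, hx⟩ : (closedBall (0 : X) 1))
  rintro z ⟨y, rfl⟩
  refine oscInf_le_two_mul fun k => ?_
  have h1 : ‖f k y.1‖ ≤ ‖f k‖ * ‖y.1‖ := ContinuousLinearMap.le_opNorm _ _
  have h2 : ‖y.1‖ ≤ 1 := mem_closedBall_zero_iff.mp y.2
  have hM0 : 0 ≤ M := le_trans (norm_nonneg _) (hM k)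
  calc |f k y.1| = ‖f k y.1‖ := (Real.norm_eq_abs _).symm
    _ ≤ ‖f k‖ * ‖y.1‖ := h1
    _ ≤ M * 1 := mul_le_mul (hM k) h2 (norm_nonneg _) hM0
    _ = M := mul_one M

end DW

/-! ### Weak-star closure lemmas -/

section WStar
variable {X : Type*} [NormedAddCommGroup X] [NormedSpace ℝ X]

local notation "J" => NormedSpace.inclusionInDoubleDual ℝ X

lemma wStar_bound {C : Set X} {u : X →L[ℝ] ℝ} {a : ℝ}
    (hC : ∀ x ∈ C, |u x| ≤ a) :
    ∀ G ∈ wStarClosure ((NormedSpace.inclusionInDoubleDual ℝ X) '' (convexHull ℝ C)),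
      |G u| ≤ a := by
  have hcvx : Convex ℝ {x : X | |u x| ≤ a} := by
    intro x hx y hy s t hs ht hst
    simp only [Set.mem_setOf_eq] at hx hy ⊢
    have hux : u (s • x + t • y) = s * u x + t * u y := by
      simp [map_add, map_smul, smul_eq_mul]
    rw [hux]
    calc |s * u x + t * u y| ≤ |s * u x| + |t * u y| := abs_add_le _ _
      _ = s * |u x| + t * |u y| := by rw [abs_mul, abs_mul, abs_of_nonneg hs, abs_of_nonneg ht]
      _ ≤ s * a + t * a := by
          exact add_le_add (mul_le_mul_of_nonneg_left hx hs) (mul_le_mul_of_nonneg_left hy ht)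
      _ = a := by rw [← add_mul, hst, one_mul]
  have hconv : convexHull ℝ C ⊆ {x : X | |u x| ≤ a} := convexHull_min hC hcvx
  intro G hG
  have hclosed : IsClosed (X := WeakDual ℝ (X →L[ℝ] ℝ))
      {G : (X →L[ℝ] ℝ) →L[ℝ] ℝ | |G u| ≤ a} := by
    have hcont : Continuous fun G : WeakDual ℝ (X →L[ℝ] ℝ) => |G u| :=
      (WeakDual.eval_continuous u).abs
    exact isClosed_Iic.preimage hcont
  have hsub : (NormedSpace.inclusionInDoubleDual ℝ X) '' (convexHull ℝ C) ⊆
      {G : (X →L[ℝ] ℝ) →L[ℝ] ℝ | |G u| ≤ a} := by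
    rintro _ ⟨x, hx, rfl⟩
    simpa [NormedSpace.dual_def] using hconv hx
  exact closure_minimal (X := WeakDual ℝ (X →L[ℝ] ℝ)) hsub hclosed hG

lemma wStar_sub_ball {C : Set X} (hC : C ⊆ closedBall 0 1) :
    wStarClosure (J '' convexHull ℝ C) ⊆ closedBall (0 : (X →L[ℝ] ℝ) →L[ℝ] ℝ) 1 := by
  have h1 : convexHull ℝ C ⊆ closedBall 0 1 := convexHull_min hC (convex_closedBall _ _)
  have hsub : J '' convexHull ℝ C ⊆ closedBall (0 : (X →L[ℝ] ℝ) →L[ℝ] ℝ) 1 := by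
    rintro _ ⟨x, hx, rfl⟩
    rw [ddual_mem_closedBall_iff]
    calc ‖J x‖ ≤ 1 * 1 := by
          rw [one_mul]
          exact (NormedSpace.double_dual_bound ℝ X x).trans (mem_closedBall_zero_iff.mp (h1 hx))
      _ = 1 := one_mul 1
  have hpre : (WeakDual.toStrongDual ⁻¹' closedBall (0 : (X →L[ℝ] ℝ) →L[ℝ] ℝ) 1) =
      closedBall (0 : (X →L[ℝ] ℝ) →L[ℝ] ℝ) 1 := by
    ext G; rw [Set.mem_preimage]; rfl
  exact closure_minimal (X := WeakDual ℝ (X →L[ℝ] ℝ)) hsub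
    (hpre ▸ WeakDual.isClosed_closedBall (0 : (X →L[ℝ] ℝ) →L[ℝ] ℝ) 1)

lemma weakBall_compact :
    IsCompact (X := WeakDual ℝ (X →L[ℝ] ℝ))
      ((closedBall (0 : (X →L[ℝ] ℝ) →L[ℝ] ℝ) 1 : Set ((X →L[ℝ] ℝ) →L[ℝ] ℝ))) := by
  have hpre : (WeakDual.toStrongDual ⁻¹' closedBall (0 : (X →L[ℝ] ℝ) →L[ℝ] ℝ) 1) =
      closedBall (0 : (X →L[ℝ] ℝ) →L[ℝ] ℝ) 1 := by
    ext G; rw [Set.mem_preimage]; rfl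
  rw [← hpre]
  exact WeakDual.isCompact_closedBall 0 1

lemma wStar_compact {C : Set X} (hC : C ⊆ closedBall 0 1) :
    IsCompact (X := WeakDual ℝ (X →L[ℝ] ℝ)) (wStarClosure (J '' convexHull ℝ C)) :=
  weakBall_compact.of_isClosed_subset isClosed_closure (wStar_sub_ball hC)

lemma wStar_convex (C : Set X) :
    Convex ℝ (wStarClosure (J '' convexHull ℝ C)) := by
  have hbase : Convex ℝ (J '' convexHull ℝ C) := by
    have := (convex_convexHull ℝ C).linear_image
      ((J : X →L[ℝ] (X →L[ℝ] ℝ) →L[ℝ] ℝ) : X →ₗ[ℝ] (X →L[ℝ] ℝ) →L[ℝ] ℝ)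
    simpa using this
  show Convex ℝ (closure (X := WeakDual ℝ (X →L[ℝ] ℝ)) (J '' convexHull ℝ C))
  exact Convex.closure (E := WeakDual ℝ (X →L[ℝ] ℝ)) hbase

end WStar

/-! ### Compactness of convex hulls of finite unions of convex compacts -/

section CompactHull
variable {W : Type*} [AddCommGroup W] [Module ℝ W] [TopologicalSpace W]
  [IsTopologicalAddGroup W] [ContinuousSMul ℝ W]

lemma isCompact_convexJoin {A B : Set W} (hA : IsCompact A) (hB : IsCompact B) :
    IsCompact (convexJoin ℝ A B) := by
  have heq : convexJoin ℝ A B =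
      (fun p : ℝ × W × W => p.1 • p.2.1 + (1 - p.1) • p.2.2) ''
        (Set.Icc (0:ℝ) 1 ×ˢ A ×ˢ B) := by
    ext z
    constructor
    · intro hz
      rw [mem_convexJoin] at hz
      obtain ⟨x, hx, y, hy, hseg⟩ := hz
      obtain ⟨a, b, ha, hb, hab, rfl⟩ := hseg
      refine ⟨(a, x, y), ⟨⟨ha, by linarith⟩, hx, hy⟩, ?_⟩
      simp only
      rw [show (1 : ℝ) - a = b by linarith]
    · rintro ⟨⟨t, x, y⟩, ⟨⟨ht0, ht1⟩, hx, hy⟩, rfl⟩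
      rw [mem_convexJoin]
      exact ⟨x, hx, y, hy, t, 1 - t, ht0, by linarith, by ring, rfl⟩
  rw [heq]
  refine IsCompact.image (isCompact_Icc.prod (hA.prod hB)) ?_
  have h1 : Continuous fun p : ℝ × W × W => p.1 • p.2.1 :=
    continuous_fst.smul (continuous_fst.comp continuous_snd)
  have h2 : Continuous fun p : ℝ × W × W => (1 - p.1) • p.2.2 :=
    (continuous_const.sub continuous_fst).smul (continuous_snd.comp continuous_snd)
  exact h1.add h2

lemma isCompact_convexHull_union_s3 {A B : Set W} (hAc : Convex ℝ A) (hBc : Convex ℝ B)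
    (hA : IsCompact A) (hB : IsCompact B) : IsCompact (convexHull ℝ (A ∪ B)) := by
  rcases A.eq_empty_or_nonempty with rfl | hA0
  · simpa [hBc.convexHull_eq] using hB
  rcases B.eq_empty_or_nonempty with rfl | hB0
  · simpa [hAc.convexHull_eq] using hA
  rw [Convex.convexHull_union hAc hBc hA0 hB0]
  exact isCompact_convexJoin hA hB

lemma isCompact_convexHull_biUnion (m : ℕ) (D : ℕ → Set W) (hc : ∀ n, Convex ℝ (D n))
    (hk : ∀ n, IsCompact (D n)) :
    IsCompact (convexHull ℝ (⋃ n ∈ Finset.range m, D n)) := by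
  induction m with
  | zero => simp
  | succ m ih =>
      have hstep : (⋃ n ∈ Finset.range (m+1), D n) = D m ∪ ⋃ n ∈ Finset.range m, D n := by
        rw [Finset.range_add_one, Finset.set_biUnion_insert]
      rw [hstep, ← convexHull_convexHull_union_right]
      exact isCompact_convexHull_union_s3 (hc m) (convex_convexHull ℝ _) (hk m) ih

end CompactHull

/-! ### The dual of the weak-star dual consists of evaluations -/

lemma weakDual_dual_eval {E : Type*} [NormedAddCommGroup E] [NormedSpace ℝ E]
    (φ : WeakDual ℝ E →L[ℝ] ℝ) : ∃ y : E, ∀ G : E →L[ℝ] ℝ, φ G = G y := by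
  have h0 : φ ⁻¹' (ball (0:ℝ) 1) ∈ 𝓝 (0 : WeakDual ℝ E) :=
    (isOpen_ball.preimage φ.continuous).mem_nhds (by simp [map_zero])
  have hnhds : 𝓝 (0 : WeakDual ℝ E) =
      Filter.comap (fun (G : WeakDual ℝ E) (y : E) => G y)
        (𝓝 (fun (y : E) => (0 : WeakDual ℝ E) y)) :=
    nhds_induced _ _
  rw [hnhds, Filter.mem_comap] at h0
  obtain ⟨U, hU, hUsub⟩ := h0
  rw [nhds_pi] at hU
  obtain ⟨I, hIfin, V, hV, hpi⟩ := Filter.mem_pi.mp hU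
  have hker : ∀ G : WeakDual ℝ E, (∀ y ∈ I, G y = 0) → φ G = 0 := by
    intro G hGy
    by_contra hφG
    set t : ℝ := 2 / (φ G) with ht
    have hmem : (fun y : E => (t • G) y) ∈ I.pi V := by
      intro y hy
      show (t • G) y ∈ V y
      have h : (t • G) y = t * G y := rfl
      rw [h, hGy y hy, mul_zero]
      exact mem_of_mem_nhds (hV y)
    have h1 : (t • G) ∈ φ ⁻¹' ball (0:ℝ) 1 := hUsub (hpi hmem)
    have h2 : |φ (t • G)| < 1 := by
      have := mem_ball_zero_iff.mp h1
      rwa [Real.norm_eq_abs] at this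
    rw [map_smul, smul_eq_mul, ht, div_mul_cancel₀ 2 hφG] at h2
    norm_num at h2
  haveI : Finite I := hIfin.to_subtype
  haveI : Fintype I := hIfin.fintype
  set L : I → (WeakDual ℝ E) →ₗ[ℝ] ℝ := fun y => (topDualPairing ℝ E).flip y.1 with hL
  set K : (WeakDual ℝ E) →ₗ[ℝ] ℝ := (φ : WeakDual ℝ E →ₗ[ℝ] ℝ) with hK
  have hker' : ⨅ i, LinearMap.ker (L i) ≤ LinearMap.ker K := by
    intro G hG
    rw [LinearMap.mem_ker]
    show φ G = 0
    apply hker G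
    intro y hy
    have h := (Submodule.mem_iInf _).mp hG ⟨y, hy⟩
    rw [LinearMap.mem_ker] at h
    exact h
  have hspan := mem_span_of_iInf_ker_le_ker (𝕜 := ℝ) hker'
  rw [Submodule.mem_span_range_iff_exists_fun] at hspan
  obtain ⟨cc, hcc⟩ := hspan
  refine ⟨∑ i : I, cc i • (i.1 : E), fun G => ?_⟩
  have h := LinearMap.congr_fun hcc G
  have hlhs : (∑ i : I, cc i • L i) G = ∑ i : I, cc i * G i.1 := by
    rw [show (∑ i : I, cc i • L i) G = ∑ i : I, (cc i • L i) G from LinearMap.sum_apply _ _ _]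
    refine Finset.sum_congr rfl fun i _ => ?_
    rfl
  rw [hlhs] at h
  have hrhs : G (∑ i : I, cc i • (i.1 : E)) = ∑ i : I, cc i * G i.1 := by
    rw [map_sum]
    refine Finset.sum_congr rfl fun i _ => ?_
    rw [map_smul, smul_eq_mul]
  rw [hrhs, h]
  rfl

/-! ### Near-attainment of the norm on the bidual ball -/

section Ball
variable {X : Type*} [NormedAddCommGroup X] [NormedSpace ℝ X]
local notation "J" => NormedSpace.inclusionInDoubleDual ℝ X

lemma exists_ball_apply_gt (g : X →L[ℝ] ℝ) {r δ : ℝ} (hr : 0 < r) (hδ : 0 < δ) :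
    ∃ G ∈ closedBall (0 : (X →L[ℝ] ℝ) →L[ℝ] ℝ) r, r * ‖g‖ - δ < G g := by
  rcases eq_or_ne g 0 with rfl | hg
  · exact ⟨0, mem_closedBall_self hr.le, by simp [hδ]⟩
  · have h1 : ‖g‖ - δ / r < ‖g‖ := by
      have : 0 < δ / r := div_pos hδ hr
      linarith
    obtain ⟨x, hx1, hx2⟩ := g.exists_lt_apply_of_lt_opNorm h1
    set t : ℝ := if 0 ≤ g x then r else -r with htdef
    have habs : |t| = r := by
      rcases le_or_gt 0 (g x) with h | h
      · rw [htdef]; simp [h, abs_of_pos hr]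
      · rw [htdef]; simp [not_le.mpr h, abs_of_pos hr]
    have htg : t * g x = r * |g x| := by
      rcases le_or_gt 0 (g x) with h | h
      · rw [htdef, if_pos h, abs_of_nonneg h]
      · rw [htdef, if_neg (not_le.mpr h), abs_of_neg h]; ring
    refine ⟨J (t • x), ?_, ?_⟩
    · rw [ddual_mem_closedBall_iff]
      calc ‖J (t • x)‖ ≤ 1 * ‖t • x‖ := by
            rw [one_mul]; exact NormedSpace.double_dual_bound ℝ X (t • x)
        _ = |t| * ‖x‖ := by rw [one_mul, norm_smul, Real.norm_eq_abs]
        _ ≤ r * 1 := by rw [habs]; exact mul_le_mul_of_nonneg_left hx1.le hr.le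
        _ = r := mul_one r
    · rw [NormedSpace.dual_def, map_smul, smul_eq_mul, htg]
      have h3 : ‖g‖ - δ / r < |g x| := by rwa [Real.norm_eq_abs] at hx2
      calc r * ‖g‖ - δ = r * (‖g‖ - δ / r) := by field_simp
        _ < r * |g x| := by exact mul_lt_mul_of_pos_left h3 hr

end Ball

instance weakDual_locallyConvex {E : Type*} [NormedAddCommGroup E] [NormedSpace ℝ E] :
    LocallyConvexSpace ℝ (WeakDual ℝ E) :=
  WeakBilin.locallyConvexSpace

/-! ### Direction 1 : the envelope condition implies the Grothendieck inequality -/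

set_option maxHeartbeats 1000000 in
lemma grothendieck_of_ienv {X : Type*} [NormedAddCommGroup X] [NormedSpace ℝ X] {c : ℝ}
    (hc : 1 ≤ c)
    (hEnv : c⁻¹ • closedBall (0 : (X →L[ℝ] ℝ) →L[ℝ] ℝ) 1 ⊆ Ienv (closedBall (0 : X) 1)) :
    IsCGrothendieck c X := by
  intro f hfb
  obtain ⟨M0, hM0⟩ := isBounded_iff_forall_norm_le.mp hfb
  set M := max M0 0 with hMdef
  have hM : ∀ k, ‖f k‖ ≤ M := fun k => le_trans (hM0 _ ⟨k, rfl⟩) (le_max_left _ _)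
  have hMnn : (0:ℝ) ≤ M := le_max_right _ _
  set δ := deltaWStar f with hδdef
  have hc0 : (0:ℝ) < c := lt_of_lt_of_le one_pos hc
  refine deltaW_le fun F hF => ?_
  refine le_of_forall_pos_le_add' fun ε' hε' => ?_
  have hden : (0:ℝ) < c * (1 + 2 * M) := mul_pos hc0 (by linarith)
  set ε := ε' / (c * (1 + 2 * M)) with hεdef
  have hε : 0 < ε := div_pos hε' hden
  -- the decomposition
  set C : ℕ → Set X := fun n =>
    {x ∈ closedBall (0:X) 1 | ∀ k l, n ≤ k → n ≤ l → |f k x - f l x| ≤ δ + ε} with hCdef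
  have hxb : ∀ x : X, x ∈ closedBall (0:X) 1 → ∀ j, |f j x| ≤ M := by
    intro x hx j
    have h1 : ‖f j x‖ ≤ ‖f j‖ * ‖x‖ := ContinuousLinearMap.le_opNorm _ _
    have h2 : ‖x‖ ≤ 1 := mem_closedBall_zero_iff.mp hx
    calc |f j x| = ‖f j x‖ := (Real.norm_eq_abs _).symm
      _ ≤ ‖f j‖ * ‖x‖ := h1
      _ ≤ M * 1 := mul_le_mul (hM j) h2 (norm_nonneg _) hMnn
      _ = M := mul_one M
  have hBC : closedBall (0:X) 1 = ⋃ n, C n := by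
    apply Set.Subset.antisymm
    · intro x hx
      have hosc : oscInf (fun k => f k x) ≤ δ := oscInf_le_deltaWStar hM hx
      have hlt : oscInf (fun k => f k x) < δ + ε := lt_of_le_of_lt hosc (by linarith)
      obtain ⟨n, hn⟩ := exists_lt_of_ciInf_lt hlt
      refine Set.mem_iUnion.mpr ⟨n, hx, fun k l hk hl => ?_⟩
      exact le_trans (le_oscSup (hxb x hx) hk hl) hn.le
    · exact Set.iUnion_subset fun n x hx => hx.1
  have hmem : c⁻¹ • F ∈ Ienv (closedBall (0:X) 1) := hEnv (Set.smul_mem_smul_set hF)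
  have h1 : c⁻¹ • F ∈ closure (convexHull ℝ (⋃ n, wStarClosure
      ((NormedSpace.inclusionInDoubleDual ℝ X) '' (convexHull ℝ (C n))))) :=
    Set.mem_iInter₂.mp hmem C hBC
  -- the increasing convex sets E' n
  set E' : ℕ → Set ((X →L[ℝ] ℝ) →L[ℝ] ℝ) := fun n =>
    {G | ∀ k l, n ≤ k → n ≤ l → |G (f k) - G (f l)| ≤ δ + ε} with hE'def
  have hDE : ∀ n, wStarClosure ((NormedSpace.inclusionInDoubleDual ℝ X) ''
      (convexHull ℝ (C n))) ⊆ E' n := by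
    intro n G hG k l hk hl
    have hb : ∀ x ∈ C n, |(f k - f l) x| ≤ δ + ε := by
      intro x hx
      have := hx.2 k l hk hl
      simpa [ContinuousLinearMap.sub_apply] using this
    have := wStar_bound hb G hG
    simpa [map_sub] using this
  have hE'mono : ∀ i j, i ≤ j → E' i ⊆ E' j := by
    intro i j hij G hG k l hk hl
    exact hG k l (le_trans hij hk) (le_trans hij hl)
  have hE'conv : ∀ n, Convex ℝ (E' n) := by
    intro n G1 h1' G2 h2' s t hs ht hst
    intro k l hk hl
    have e1 : (s • G1 + t • G2) (f k) = s * G1 (f k) + t * G2 (f k) := rfl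
    have e2 : (s • G1 + t • G2) (f l) = s * G1 (f l) + t * G2 (f l) := rfl
    rw [e1, e2]
    have d1 := h1' k l hk hl
    have d2 := h2' k l hk hl
    calc |s * G1 (f k) + t * G2 (f k) - (s * G1 (f l) + t * G2 (f l))|
        = |s * (G1 (f k) - G1 (f l)) + t * (G2 (f k) - G2 (f l))| := by ring_nf
      _ ≤ |s * (G1 (f k) - G1 (f l))| + |t * (G2 (f k) - G2 (f l))| := abs_add_le _ _
      _ = s * |G1 (f k) - G1 (f l)| + t * |G2 (f k) - G2 (f l)| := by
          rw [abs_mul, abs_mul, abs_of_nonneg hs, abs_of_nonneg ht]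
      _ ≤ s * (δ + ε) + t * (δ + ε) := add_le_add
          (mul_le_mul_of_nonneg_left d1 hs) (mul_le_mul_of_nonneg_left d2 ht)
      _ = δ + ε := by rw [← add_mul, hst, one_mul]
  have hUconv : Convex ℝ (⋃ n, E' n) := by
    intro x hx y hy s t hs ht hst
    obtain ⟨i, hi⟩ := Set.mem_iUnion.mp hx
    obtain ⟨j, hj⟩ := Set.mem_iUnion.mp hy
    refine Set.mem_iUnion.mpr ⟨max i j, ?_⟩
    exact hE'conv (max i j) (hE'mono i (max i j) (le_max_left _ _) hi)
      (hE'mono j (max i j) (le_max_right _ _) hj) hs ht hst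
  have hhull : convexHull ℝ (⋃ n, wStarClosure ((NormedSpace.inclusionInDoubleDual ℝ X) ''
      (convexHull ℝ (C n)))) ⊆ ⋃ n, E' n :=
    convexHull_min (Set.iUnion_mono hDE) hUconv
  have h2 : c⁻¹ • F ∈ closure (⋃ n, E' n) := closure_mono hhull h1
  have h2' : ∀ r > 0, ∃ H ∈ ⋃ n, E' n, dist (c⁻¹ • F) H < r :=
    Metric.mem_closure_iff.mp (by exact h2)
  obtain ⟨H, hHmem, hHdist⟩ := h2' ε hε
  obtain ⟨N, hN⟩ := Set.mem_iUnion.mp hHmem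
  have hsmul : ∀ j, (c⁻¹ • F) (f j) = c⁻¹ * F (f j) := fun j => by
    rw [ContinuousLinearMap.smul_apply, smul_eq_mul]
  have hdiff : ∀ j, |(c⁻¹ • F) (f j) - H (f j)| ≤ ε * M := by
    intro j
    have h3 : ‖((c⁻¹ • F) - H) (f j)‖ ≤ ‖(c⁻¹ • F) - H‖ * ‖f j‖ :=
      ContinuousLinearMap.le_opNorm _ _
    have h4 : dist (c⁻¹ • F) H = ‖(c⁻¹ • F) - H‖ := by exact dist_eq_norm (E := (X →L[ℝ] ℝ) →L[ℝ] ℝ) _ _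
    have h5 : ((c⁻¹ • F) - H) (f j) = (c⁻¹ • F) (f j) - H (f j) := rfl
    calc |(c⁻¹ • F) (f j) - H (f j)| = ‖((c⁻¹ • F) - H) (f j)‖ := by
          rw [h5]; exact (Real.norm_eq_abs _).symm
      _ ≤ ‖(c⁻¹ • F) - H‖ * ‖f j‖ := h3
      _ ≤ ε * M := by
          apply mul_le_mul _ (hM j) (norm_nonneg _) hε.le
          rw [← h4]; exact hHdist.le
  have hFf : ∀ k l, N ≤ k → N ≤ l → |F (f k) - F (f l)| ≤ c * (δ + ε + 2 * (ε * M)) := by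
    intro k l hk hl
    have hH' := hN k l hk hl
    have hstep : |(c⁻¹ • F) (f k) - (c⁻¹ • F) (f l)| ≤ δ + ε + 2 * (ε * M) := by
      have t1 := hdiff k
      have t2 := hdiff l
      have t3 : (c⁻¹ • F) (f k) - (c⁻¹ • F) (f l) =
          ((c⁻¹ • F) (f k) - H (f k)) + (H (f k) - H (f l)) + (H (f l) - (c⁻¹ • F) (f l)) := by
        ring
      rw [t3]
      calc |((c⁻¹ • F) (f k) - H (f k)) + (H (f k) - H (f l)) + (H (f l) - (c⁻¹ • F) (f l))|
          ≤ |((c⁻¹ • F) (f k) - H (f k)) + (H (f k) - H (f l))| + |H (f l) - (c⁻¹ • F) (f l)| :=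
            abs_add_le _ _
        _ ≤ |(c⁻¹ • F) (f k) - H (f k)| + |H (f k) - H (f l)| + |H (f l) - (c⁻¹ • F) (f l)| := by
            linarith [abs_add_le ((c⁻¹ • F) (f k) - H (f k)) (H (f k) - H (f l))]
        _ ≤ ε * M + (δ + ε) + ε * M := by
            have t4 : |H (f l) - (c⁻¹ • F) (f l)| = |(c⁻¹ • F) (f l) - H (f l)| := abs_sub_comm _ _
            rw [t4]
            exact add_le_add (add_le_add t1 hH') t2
        _ = δ + ε + 2 * (ε * M) := by ring
    have hval : |F (f k) - F (f l)| = c * |(c⁻¹ • F) (f k) - (c⁻¹ • F) (f l)| := by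
      rw [hsmul, hsmul]
      rw [show c⁻¹ * F (f k) - c⁻¹ * F (f l) = c⁻¹ * (F (f k) - F (f l)) by ring]
      rw [abs_mul, abs_of_pos (inv_pos.mpr hc0), ← mul_assoc, mul_inv_cancel₀ hc0.ne', one_mul]
    rw [hval]
    exact mul_le_mul_of_nonneg_left hstep hc0.le
  have hFb : ∀ j, |F (f j)| ≤ M := by
    intro j
    have h1' : ‖F (f j)‖ ≤ ‖F‖ * ‖f j‖ := ContinuousLinearMap.le_opNorm _ _
    have h2' : ‖F‖ ≤ 1 := (ddual_mem_closedBall_iff F 1).mp hF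
    calc |F (f j)| = ‖F (f j)‖ := (Real.norm_eq_abs _).symm
      _ ≤ ‖F‖ * ‖f j‖ := h1'
      _ ≤ 1 * M := mul_le_mul h2' (hM j) (norm_nonneg _) zero_le_one
      _ = M := one_mul M
  have hosc : oscInf (fun k => F (f k)) ≤ c * (δ + ε + 2 * (ε * M)) :=
    oscInf_le hFb ⟨N, hFf⟩
  have hcomp : c * (δ + ε + 2 * (ε * M)) = c * δ + ε' := by
    have : c * (ε + 2 * (ε * M)) = ε * (c * (1 + 2 * M)) := by ring
    rw [hεdef]
    field_simp
    ring
  linarith [hosc, hcomp.symm.le]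


/-! ### Direction 2 : the Grothendieck inequality implies the envelope condition -/

set_option maxHeartbeats 1000000 in
/-- Separation of a point from a weak-star compact convex set by a norm-one functional. -/
lemma exists_sep {X : Type*} [NormedAddCommGroup X] [NormedSpace ℝ X]
    (K : Set ((X →L[ℝ] ℝ) →L[ℝ] ℝ)) (hKconv : Convex ℝ K)
    (hKcomp : IsCompact (X := WeakDual ℝ (X →L[ℝ] ℝ)) K)
    (hK0 : (0 : (X →L[ℝ] ℝ) →L[ℝ] ℝ) ∈ K)
    (G₁ : (X →L[ℝ] ℝ) →L[ℝ] ℝ) {ε₀ : ℝ} (hε₀ : 0 < ε₀)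
    (hdist : ∀ H ∈ K, ε₀ ≤ dist G₁ H) :
    ∃ fm : X →L[ℝ] ℝ, ‖fm‖ = 1 ∧ ∀ H ∈ K, H fm + ε₀ / 2 ≤ G₁ fm := by
  set A : Set ((X →L[ℝ] ℝ) →L[ℝ] ℝ) :=
    K + closedBall (0 : (X →L[ℝ] ℝ) →L[ℝ] ℝ) (ε₀ / 2) with hAdef
  have hballc : IsCompact (X := WeakDual ℝ (X →L[ℝ] ℝ))
      ((closedBall (0 : (X →L[ℝ] ℝ) →L[ℝ] ℝ) (ε₀ / 2) : Set ((X →L[ℝ] ℝ) →L[ℝ] ℝ))) := by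
    have hpre : (WeakDual.toStrongDual ⁻¹' closedBall (0 : (X →L[ℝ] ℝ) →L[ℝ] ℝ) (ε₀/2)) =
        closedBall (0 : (X →L[ℝ] ℝ) →L[ℝ] ℝ) (ε₀/2) := by
      ext G; rw [Set.mem_preimage]; rfl
    rw [← hpre]
    exact WeakDual.isCompact_closedBall 0 (ε₀/2)
  have hAcomp : IsCompact (X := WeakDual ℝ (X →L[ℝ] ℝ)) A :=
    IsCompact.add (N := WeakDual ℝ (X →L[ℝ] ℝ)) hKcomp hballc
  have hAconv : Convex ℝ A := hKconv.add (ddual_convex_closedBall _)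
  have hFA : G₁ ∉ A := by
    rintro ⟨H, hH, G', hG', rfl⟩
    have h1 : dist (H + G') H = ‖G'‖ := by
      have h0 : dist (H + G') H = ‖(H + G') - H‖ := by exact dist_eq_norm (E := (X →L[ℝ] ℝ) →L[ℝ] ℝ) _ _
      rw [h0]; exact congrArg norm (add_sub_cancel_left H G')
    have h2 : ‖G'‖ ≤ ε₀ / 2 := (ddual_mem_closedBall_iff G' (ε₀/2)).mp hG'
    have h3 := hdist H hH
    rw [h1] at h3
    linarith
  have hAclosed : IsClosed (X := WeakDual ℝ (X →L[ℝ] ℝ)) A := hAcomp.isClosed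
  obtain ⟨φ, u, hφA, hφF⟩ :=
    geometric_hahn_banach_closed_point (E := WeakDual ℝ (X →L[ℝ] ℝ)) hAconv hAclosed hFA
  obtain ⟨g₀, hg₀⟩ := weakDual_dual_eval φ
  have h0A : (0 : (X →L[ℝ] ℝ) →L[ℝ] ℝ) ∈ A :=
    ⟨0, hK0, 0, mem_closedBall_self (by linarith), add_zero 0⟩
  have hg₀ne : g₀ ≠ 0 := by
    rintro rfl
    have e1 : φ ((0 : (X →L[ℝ] ℝ) →L[ℝ] ℝ)) = 0 := by rw [hg₀]; exact map_zero _
    have e2 : φ G₁ = 0 := by rw [hg₀]; exact map_zero _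
    have h1 := hφA _ h0A
    rw [e1] at h1
    rw [e2] at hφF
    linarith
  have hsepH : ∀ H ∈ K, H g₀ + (ε₀ / 2) * ‖g₀‖ ≤ u := by
    intro H hH
    refine le_of_forall_pos_le_add' fun δ hδ => ?_
    obtain ⟨G', hG'mem, hG'gt⟩ := exists_ball_apply_gt g₀ (by linarith : (0:ℝ) < ε₀/2) hδ
    have hmemA : H + G' ∈ A := Set.add_mem_add hH hG'mem
    have hlt := hφA _ hmemA
    rw [hg₀] at hlt
    have he : (H + G') g₀ = H g₀ + G' g₀ := rfl
    rw [he] at hlt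
    linarith
  have hu : u < G₁ g₀ := by
    have := hφF
    rwa [hg₀] at this
  have hw : (0:ℝ) < ‖g₀‖ := norm_pos_iff.mpr hg₀ne
  refine ⟨‖g₀‖⁻¹ • g₀, ?_, ?_⟩
  · have hle : ‖‖g₀‖⁻¹ • g₀‖ ≤ 1 := by
      have h1 := ContinuousLinearMap.opNorm_smul_le (‖g₀‖⁻¹) g₀
      rw [norm_inv, norm_norm, inv_mul_cancel₀ hw.ne'] at h1
      exact h1
    have hge : 1 ≤ ‖‖g₀‖⁻¹ • g₀‖ := by
      have h2 : (‖g₀‖ : ℝ) • (‖g₀‖⁻¹ • g₀) = g₀ := by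
        rw [smul_smul, mul_inv_cancel₀ hw.ne', one_smul]
      have h3 := ContinuousLinearMap.opNorm_smul_le (‖g₀‖ : ℝ) (‖g₀‖⁻¹ • g₀)
      rw [h2, norm_norm] at h3
      by_contra hlt
      push_neg at hlt
      nlinarith
    exact le_antisymm hle hge
  · intro H hH
    have key : H g₀ + ε₀ / 2 * ‖g₀‖ ≤ G₁ g₀ := le_trans (hsepH H hH) hu.le
    have h2 := mul_le_mul_of_nonneg_left key (inv_nonneg.mpr hw.le)
    rw [mul_add] at h2
    have h3 : ‖g₀‖⁻¹ * (ε₀ / 2 * ‖g₀‖) = ε₀ / 2 := by field_simp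
    rw [h3] at h2
    have hHs : H (‖g₀‖⁻¹ • g₀) = ‖g₀‖⁻¹ * H g₀ := by
      rw [map_smul, smul_eq_mul]
    have hFs : G₁ (‖g₀‖⁻¹ • g₀) = ‖g₀‖⁻¹ * G₁ g₀ := by
      rw [map_smul, smul_eq_mul]
    rw [hHs, hFs]
    exact h2

set_option maxHeartbeats 2000000 in
lemma ienv_of_grothendieck {X : Type*} [NormedAddCommGroup X] [NormedSpace ℝ X] {c : ℝ}
    (hc : 1 ≤ c) (hG : IsCGrothendieck c X) :
    c⁻¹ • closedBall (0 : (X →L[ℝ] ℝ) →L[ℝ] ℝ) 1 ⊆ Ienv (closedBall (0 : X) 1) := by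
  have hc0 : (0:ℝ) < c := lt_of_lt_of_le one_pos hc
  intro G₀ hG₀
  obtain ⟨F, hF, rfl⟩ := Set.mem_smul_set.mp hG₀
  rw [Ienv]
  refine Set.mem_iInter₂.mpr fun C hBC => ?_
  set D : ℕ → Set ((X →L[ℝ] ℝ) →L[ℝ] ℝ) := fun n =>
    wStarClosure ((NormedSpace.inclusionInDoubleDual ℝ X) '' (convexHull ℝ (C n))) with hDdef
  by_contra hnot
  set T : Set ((X →L[ℝ] ℝ) →L[ℝ] ℝ) := convexHull ℝ (⋃ n, D n) with hTdef
  have hd : ∃ ε₀ > 0, ∀ b ∈ T, ε₀ ≤ dist (c⁻¹ • F) b := by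
    by_contra hcon
    push_neg at hcon
    refine hnot ?_
    have hmem : ∀ ε > 0, ∃ b ∈ T, dist (c⁻¹ • F) b < ε := fun ε hε => hcon ε hε
    exact (by exact Metric.mem_closure_iff.mpr hmem)
  obtain ⟨ε₀, hε₀, hd⟩ := hd
  have hCball : ∀ n, C n ⊆ closedBall (0:X) 1 := by
    intro n x hx
    rw [hBC]
    exact Set.mem_iUnion.mpr ⟨n, hx⟩
  obtain ⟨N, hN⟩ := Set.mem_iUnion.mp
    (hBC ▸ mem_closedBall_self zero_le_one : (0:X) ∈ ⋃ n, C n)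
  have hDball : ∀ n, D n ⊆ closedBall (0 : (X →L[ℝ] ℝ) →L[ℝ] ℝ) 1 :=
    fun n => wStar_sub_ball (hCball n)
  have hDconv : ∀ n, Convex ℝ (D n) := fun n => wStar_convex (C n)
  have hDcomp : ∀ n, IsCompact (X := WeakDual ℝ (X →L[ℝ] ℝ)) (D n) :=
    fun n => wStar_compact (hCball n)
  have hD0 : (0 : (X →L[ℝ] ℝ) →L[ℝ] ℝ) ∈ D N := by
    have h1 : (NormedSpace.inclusionInDoubleDual ℝ X) 0 ∈
        (NormedSpace.inclusionInDoubleDual ℝ X) '' (convexHull ℝ (C N)) :=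
      Set.mem_image_of_mem _ (subset_convexHull ℝ _ hN)
    rw [map_zero] at h1
    exact subset_closure (X := WeakDual ℝ (X →L[ℝ] ℝ)) h1
  set K : ℕ → Set ((X →L[ℝ] ℝ) →L[ℝ] ℝ) := fun m =>
    convexHull ℝ (⋃ n ∈ Finset.range (m + 1 + N), D n) with hKdef
  have hDK : ∀ n m, n ≤ m → D n ⊆ K m := by
    intro n m hnm x hx
    exact subset_convexHull ℝ _ (Set.mem_biUnion (Finset.mem_range.mpr (by omega)) hx)
  have hK0 : ∀ m, (0 : (X →L[ℝ] ℝ) →L[ℝ] ℝ) ∈ K m := by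
    intro m
    exact subset_convexHull ℝ _ (Set.mem_biUnion (Finset.mem_range.mpr (by omega)) hD0)
  have hKT : ∀ m, K m ⊆ T := by
    intro m
    refine convexHull_min ?_ (convex_convexHull ℝ _)
    refine Set.iUnion₂_subset fun n _ => ?_
    exact (Set.subset_iUnion D n).trans (subset_convexHull ℝ _)
  have hKball : ∀ m, K m ⊆ closedBall (0 : (X →L[ℝ] ℝ) →L[ℝ] ℝ) 1 := by
    intro m
    refine convexHull_min ?_ (ddual_convex_closedBall 1)
    exact Set.iUnion₂_subset fun n _ => hDball n
  have hKconv : ∀ m, Convex ℝ (K m) := fun m => convex_convexHull ℝ _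
  have hKcomp : ∀ m, IsCompact (X := WeakDual ℝ (X →L[ℝ] ℝ)) (K m) := fun m =>
    isCompact_convexHull_biUnion (W := WeakDual ℝ (X →L[ℝ] ℝ)) (m + 1 + N) D hDconv hDcomp
  have hsep : ∀ m : ℕ, ∃ fm : X →L[ℝ] ℝ, ‖fm‖ = 1 ∧
      ∀ H ∈ K m, H fm + ε₀ / 2 ≤ c⁻¹ * F fm := by
    intro m
    obtain ⟨fm, h1, h2⟩ := exists_sep (K m) (hKconv m) (hKcomp m) (hK0 m) (c⁻¹ • F) hε₀
      (fun H hH => hd H (hKT m hH))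
    refine ⟨fm, h1, fun H hH => ?_⟩
    have := h2 H hH
    rwa [ContinuousLinearMap.smul_apply, smul_eq_mul] at this
  choose ff hff1 hff2 using hsep
  set σ : ℕ → ℝ := fun m => sSup ((fun H => H (ff m)) '' K m) with hσdef
  have hKub : ∀ m, ∀ z ∈ (fun H => H (ff m)) '' K m, z ≤ 1 := by
    rintro m z ⟨H, hH, rfl⟩
    have h1 : ‖H (ff m)‖ ≤ ‖H‖ * ‖ff m‖ := ContinuousLinearMap.le_opNorm _ _
    have h2 : ‖H‖ ≤ 1 := (ddual_mem_closedBall_iff H 1).mp (hKball m hH)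
    calc H (ff m) ≤ |H (ff m)| := le_abs_self _
      _ = ‖H (ff m)‖ := (Real.norm_eq_abs _).symm
      _ ≤ ‖H‖ * ‖ff m‖ := h1
      _ ≤ 1 * 1 := by rw [hff1 m]; exact mul_le_mul_of_nonneg_right h2 zero_le_one
      _ = 1 := one_mul 1
  have hσ0 : ∀ m, 0 ≤ σ m := by
    intro m
    have h0 : (0:ℝ) ∈ (fun H => H (ff m)) '' K m := ⟨0, hK0 m, rfl⟩
    exact le_csSup ⟨1, fun z hz => hKub m z hz⟩ h0
  have hσ1 : ∀ m, σ m ≤ 1 := fun m => csSup_le ⟨0, ⟨0, hK0 m, rfl⟩⟩ (hKub m)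
  have hσsep : ∀ m, σ m + ε₀ / 2 ≤ c⁻¹ * F (ff m) := by
    intro m
    have hub : ∀ z ∈ (fun H => H (ff m)) '' K m, z ≤ c⁻¹ * F (ff m) - ε₀ / 2 := by
      rintro z ⟨H, hH, rfl⟩
      linarith [hff2 m H hH]
    linarith [csSup_le (⟨0, ⟨0, hK0 m, rfl⟩⟩ : ((fun H => H (ff m)) '' K m).Nonempty) hub]
  have hFfm : ∀ m, c * σ m + c * (ε₀ / 2) ≤ F (ff m) := by
    intro m
    have h1 := mul_le_mul_of_nonneg_left (hσsep m) hc0.le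
    rw [mul_add, ← mul_assoc, mul_inv_cancel₀ hc0.ne', one_mul] at h1
    linarith
  have hev : ∀ x ∈ closedBall (0:X) 1, ∃ n₀, ∀ m, n₀ ≤ m → (ff m) x ≤ σ m := by
    intro x hx
    obtain ⟨n, hn⟩ := Set.mem_iUnion.mp (hBC ▸ hx : x ∈ ⋃ n, C n)
    refine ⟨n, fun m hm => ?_⟩
    have hJx : (NormedSpace.inclusionInDoubleDual ℝ X) x ∈ K m :=
      hDK n m hm (subset_closure (X := WeakDual ℝ (X →L[ℝ] ℝ))
        (Set.mem_image_of_mem _ (subset_convexHull ℝ _ hn)))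
    have h1 : ((NormedSpace.inclusionInDoubleDual ℝ X) x) (ff m) ≤ σ m :=
      le_csSup ⟨1, fun z hz => hKub m z hz⟩ ⟨_, hJx, rfl⟩
    rwa [NormedSpace.dual_def] at h1
  obtain ⟨s₀, hs₀mem, ψ, hψmono, hψtend⟩ := tendsto_subseq_of_bounded
    (Metric.isBounded_Icc (0:ℝ) 1) (fun m => Set.mem_Icc.mpr ⟨hσ0 m, hσ1 m⟩)
  set g : ℕ → X →L[ℝ] ℝ := fun k =>
    if Even k then ff (ψ (k / 2)) else -(ff (ψ (k / 2))) with hgdef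
  have hgnorm : ∀ k, ‖g k‖ = 1 := by
    intro k
    by_cases h : Even k
    · rw [hgdef]; simp only [if_pos h]; exact hff1 _
    · rw [hgdef]; simp only [if_neg h, norm_neg]; exact hff1 _
  have hgb : Bornology.IsBounded (Set.range g) := by
    rw [isBounded_iff_forall_norm_le]
    exact ⟨1, by rintro y ⟨k, rfl⟩; rw [hgnorm]⟩
  have hgM : ∀ k, ‖g k‖ ≤ 1 := fun k => (hgnorm k).le
  have hgabs : ∀ k (x : X), ‖x‖ ≤ 1 → |g k x| ≤ 1 := by
    intro k x hx
    have h1 : ‖g k x‖ ≤ ‖g k‖ * ‖x‖ := ContinuousLinearMap.le_opNorm _ _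
    calc |g k x| = ‖g k x‖ := (Real.norm_eq_abs _).symm
      _ ≤ ‖g k‖ * ‖x‖ := h1
      _ ≤ 1 * 1 := mul_le_mul (hgM k) hx (norm_nonneg _) zero_le_one
      _ = 1 := one_mul 1
  -- upper bound on deltaWStar g
  have hdws : deltaWStar g ≤ 2 * s₀ := by
    rw [deltaWStar_eq]
    refine ciSup_le fun x => ?_
    refine le_of_forall_pos_le_add' fun ε hε => ?_
    obtain ⟨n₁, hn₁⟩ := hev x.1 x.2
    have hmx : -x.1 ∈ closedBall (0:X) 1 := by
      rw [mem_closedBall_zero_iff, norm_neg, ← mem_closedBall_zero_iff]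
      exact x.2
    obtain ⟨n₂, hn₂⟩ := hev (-x.1) hmx
    obtain ⟨j₀, hj₀⟩ := Metric.tendsto_atTop.mp hψtend (ε / 2) (by linarith)
    set j₁ := max j₀ (max n₁ n₂) with hj₁def
    have hbig : ∀ k, 2 * j₁ ≤ k → |g k x.1| ≤ s₀ + ε / 2 := by
      intro k hk
      have hj : j₁ ≤ k / 2 := by omega
      have hψge : k / 2 ≤ ψ (k / 2) := hψmono.le_apply
      have h1 : ff (ψ (k/2)) x.1 ≤ σ (ψ (k/2)) := hn₁ _ (by omega)
      have h2' : ff (ψ (k/2)) (-x.1) ≤ σ (ψ (k/2)) := hn₂ _ (by omega)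
      have h2 : -(ff (ψ (k/2)) x.1) ≤ σ (ψ (k/2)) := by rwa [map_neg] at h2'
      have h3 : |ff (ψ (k/2)) x.1| ≤ σ (ψ (k/2)) := abs_le.mpr ⟨by linarith, h1⟩
      have h4 := hj₀ (k/2) (by omega)
      have h5 : σ (ψ (k/2)) ≤ s₀ + ε / 2 := by
        have h6 : |σ (ψ (k/2)) - s₀| < ε/2 := by
          have : dist ((σ ∘ ψ) (k/2)) s₀ < ε/2 := h4
          rwa [Real.dist_eq] at this
        have := abs_lt.mp h6
        linarith [this.2]
      have h7 : |g k x.1| = |ff (ψ (k/2)) x.1| := by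
        by_cases h : Even k
        · rw [hgdef]; simp only [if_pos h]
        · rw [hgdef]; simp only [if_neg h, ContinuousLinearMap.neg_apply, abs_neg]
      rw [h7]
      linarith
    have hxb : ∀ k, |g k x.1| ≤ 1 := fun k =>
      hgabs k x.1 (mem_closedBall_zero_iff.mp x.2)
    refine oscInf_le hxb ⟨2 * j₁, fun k l hk hl => ?_⟩
    calc |g k x.1 - g l x.1| ≤ |g k x.1| + |g l x.1| := abs_sub _ _
      _ ≤ (s₀ + ε/2) + (s₀ + ε/2) := add_le_add (hbig k hk) (hbig l hl)
      _ = 2*s₀ + ε := by ring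
  -- lower bound on oscillation of F ∘ g
  have hFnorm : ‖F‖ ≤ 1 := (ddual_mem_closedBall_iff F 1).mp hF
  have hFb1 : ∀ k, |F (g k)| ≤ 1 := by
    intro k
    have h1 : ‖F (g k)‖ ≤ ‖F‖ * ‖g k‖ := ContinuousLinearMap.le_opNorm _ _
    calc |F (g k)| = ‖F (g k)‖ := (Real.norm_eq_abs _).symm
      _ ≤ ‖F‖ * ‖g k‖ := h1
      _ ≤ 1 * 1 := mul_le_mul hFnorm (hgM k) (norm_nonneg _) zero_le_one
      _ = 1 := one_mul 1
  have hFg : ∀ j, F (g (2*j)) = F (ff (ψ j)) ∧ F (g (2*j+1)) = -(F (ff (ψ j))) := by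
    intro j
    have hdiv1 : (2*j) / 2 = j := by omega
    have hdiv2 : (2*j+1) / 2 = j := by omega
    constructor
    · rw [hgdef]
      simp only [if_pos (even_two_mul j), hdiv1]
    · rw [hgdef]
      have ho : ¬ Even (2*j+1) := by
        simp [Nat.even_add_one, Nat.even_iff]
      simp only [if_neg ho, hdiv2, map_neg]
  have hlow : 2 * (c * s₀) + c * ε₀ ≤ oscInf fun k => F (g k) := by
    refine le_oscInf fun n => ?_
    refine le_of_forall_pos_le_add' fun ε hε => ?_
    obtain ⟨j₀, hj₀⟩ := Metric.tendsto_atTop.mp hψtend (ε / (2 * c)) (by positivity)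
    set j := max n j₀ with hjdef
    have hσj : s₀ - ε / (2*c) ≤ σ (ψ j) := by
      have h1 : dist (σ (ψ j)) s₀ < ε / (2*c) := hj₀ j (le_max_right _ _)
      rw [Real.dist_eq] at h1
      have := abs_lt.mp h1
      linarith [this.1]
    have hFj := hFfm (ψ j)
    have hFj0 : 0 ≤ F (ff (ψ j)) := by
      have h1 : 0 ≤ c * σ (ψ j) := mul_nonneg hc0.le (hσ0 (ψ j))
      have h2 : 0 < c * (ε₀/2) := mul_pos hc0 (by linarith)
      linarith
    have hpair : |F (g (2*j)) - F (g (2*j+1))| = 2 * F (ff (ψ j)) := by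
      rw [(hFg j).1, (hFg j).2, sub_neg_eq_add]
      rw [show F (ff (ψ j)) + F (ff (ψ j)) = 2 * F (ff (ψ j)) by ring]
      exact abs_of_nonneg (by linarith)
    have hle := le_oscSup hFb1 (show n ≤ 2*j by omega) (show n ≤ 2*j+1 by omega)
    rw [hpair] at hle
    have h2 := mul_le_mul_of_nonneg_left hσj hc0.le
    have h3 : c * (ε / (2*c)) = ε / 2 := by field_simp
    rw [mul_sub, h3] at h2
    linarith
  have hdw := le_deltaW hgM hF
  have hGr := hG g hgb
  have hfinal : c * deltaWStar g ≤ c * (2 * s₀) := mul_le_mul_of_nonneg_left hdws hc0.le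
  have hε₀c : 0 < c * ε₀ := mul_pos hc0 hε₀
  linarith [hlow, hdw, hGr, hfinal]

/-- A Banach space `X` is `c`-Grothendieck if and only if the (I)-envelope of its closed
unit ball contains `(1/c) · B_{X**}`. -/
theorem isCGrothendieck_iff_ienv {X : Type*} [NormedAddCommGroup X] [NormedSpace ℝ X]
    [CompleteSpace X] (c : ℝ) (hc : 1 ≤ c) :
    IsCGrothendieck c X ↔
      c⁻¹ • closedBall (0 : (X →L[ℝ] ℝ) →L[ℝ] ℝ) 1 ⊆ Ienv (closedBall (0 : X) 1) := by
  constructor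
  · exact ienv_of_grothendieck hc
  · exact grothendieck_of_ienv hc
end

section
/- Let X be a Banach space and c ≥ 1. If X is c-Grothendieck and Y is a quotient of X (i.e., there exists a surjective bounded linear quotient map q : X → Y mapping the open unit ball of X onto the open unit ball of Y), then Y is c-Grothendieck. -/
set_option maxHeartbeats 1000000

open Filter Metric Topology

private lemma norm_le_of_mem_cb {E : Type*} [SeminormedAddCommGroup E] {F : E} {r : ℝ}
    (h : F ∈ Metric.closedBall (0:E) r) : ‖F‖ ≤ r := mem_closedBall_zero_iff.mp h

private lemma mem_cb_of_norm_le {E : Type*} [SeminormedAddCommGroup E] {F : E} {r : ℝ}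
    (h : ‖F‖ ≤ r) : F ∈ Metric.closedBall (0:E) r := mem_closedBall_zero_iff.mpr h

private lemma auxSup_nonneg (φ : ℕ → ℝ) (n : ℕ) :
    0 ≤ ⨆ p : {p : ℕ × ℕ // n ≤ p.1 ∧ n ≤ p.2}, |φ p.1.1 - φ p.1.2| :=
  Real.iSup_nonneg fun _ => abs_nonneg _

private lemma auxInf_nonneg (φ : ℕ → ℝ) :
    0 ≤ ⨅ n : ℕ, ⨆ p : {p : ℕ × ℕ // n ≤ p.1 ∧ n ≤ p.2}, |φ p.1.1 - φ p.1.2| :=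
  le_ciInf fun n => auxSup_nonneg φ n

private lemma auxInf_le (φ : ℕ → ℝ) {M : ℝ} (hM : ∀ k, |φ k| ≤ M) :
    (⨅ n : ℕ, ⨆ p : {p : ℕ × ℕ // n ≤ p.1 ∧ n ≤ p.2}, |φ p.1.1 - φ p.1.2|) ≤ 2 * M := by
  have hM0 : 0 ≤ M := le_trans (abs_nonneg _) (hM 0)
  refine ciInf_le_of_le ⟨0, ?_⟩ 0 ?_
  · rintro x ⟨n, rfl⟩; exact auxSup_nonneg φ n
  · refine Real.iSup_le (fun p => ?_) (by linarith)
    calc |φ p.1.1 - φ p.1.2| ≤ |φ p.1.1| + |φ p.1.2| := abs_sub _ _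
    _ ≤ M + M := add_le_add (hM _) (hM _)
    _ = 2 * M := by ring

private lemma extend_of_isometry {E E' : Type*} [NormedAddCommGroup E] [NormedSpace ℝ E]
    [NormedAddCommGroup E'] [NormedSpace ℝ E'] (ι : E →ₗᵢ[ℝ] E') (G : E →L[ℝ] ℝ) :
    ∃ F : E' →L[ℝ] ℝ, (∀ x : E, F (ι x) = G x) ∧ ‖F‖ ≤ ‖G‖ := by
  set e := ι.equivRange with he
  set h : (LinearMap.range ι.toLinearMap) →L[ℝ] ℝ :=
    G.comp e.symm.toLinearIsometry.toContinuousLinearMap with hh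
  have hhle : ‖h‖ ≤ ‖G‖ := by
    refine h.opNorm_le_bound (norm_nonneg _) fun z => ?_
    calc |h z| = |G (e.symm z)| := rfl
    _ ≤ ‖G‖ * ‖e.symm z‖ := G.le_opNorm _
    _ = ‖G‖ * ‖z‖ := by rw [e.symm.norm_map]
  obtain ⟨F, hF1, hF2⟩ := exists_extension_norm_eq (LinearMap.range ι.toLinearMap) h
  refine ⟨F, fun x => ?_, hF2 ▸ hhle⟩
  have hmem : ι x ∈ LinearMap.range ι.toLinearMap := ⟨x, rfl⟩
  have h1 : F (ι x) = h ⟨ι x, hmem⟩ := hF1 ⟨ι x, hmem⟩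
  have h2 : (⟨ι x, hmem⟩ : LinearMap.range ι.toLinearMap) = e x := Subtype.ext rfl
  rw [h1, h2]
  show G (e.symm (e x)) = G x
  rw [e.symm_apply_apply]

/-- The `c`-Grothendieck property passes to quotients: if `q : X → Y` is a surjective bounded
linear quotient map (mapping the open unit ball of `X` onto the open unit ball of `Y`) and `X`
is `c`-Grothendieck, then so is `Y`. -/
theorem isCGrothendieck_quotient {X Y : Type*} [NormedAddCommGroup X] [NormedSpace ℝ X]
    [CompleteSpace X] [NormedAddCommGroup Y] [NormedSpace ℝ Y] [CompleteSpace Y]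
    (c : ℝ) (hc : 1 ≤ c) (hX : IsCGrothendieck c X)
    (q : X →L[ℝ] Y) (hsurj : Function.Surjective q)
    (hq : q '' ball (0 : X) 1 = ball (0 : Y) 1) :
    IsCGrothendieck c Y := by
  intro g hg
  obtain ⟨M, hM⟩ := isBounded_iff_forall_norm_le.mp hg
  have hMg : ∀ n, ‖g n‖ ≤ M := fun n => hM _ ⟨n, rfl⟩
  have hM0 : 0 ≤ M := le_trans (norm_nonneg _) (hMg 0)
  -- q contracts norms
  have hq1 : ∀ x : X, ‖q x‖ ≤ ‖x‖ := by
    intro x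
    refine le_of_forall_pos_le_add fun ε hε => ?_
    have hpos : 0 < ‖x‖ + ε := by positivity
    have hx' : (‖x‖ + ε)⁻¹ • x ∈ ball (0 : X) 1 := by
      rw [mem_ball_zero_iff, norm_smul, norm_inv, Real.norm_of_nonneg hpos.le]
      rw [inv_mul_lt_iff₀ hpos]; linarith
    have : q ((‖x‖ + ε)⁻¹ • x) ∈ ball (0 : Y) 1 := hq ▸ Set.mem_image_of_mem _ hx'
    rw [mem_ball_zero_iff, map_smul, norm_smul, norm_inv,
      Real.norm_of_nonneg hpos.le, inv_mul_lt_iff₀ hpos] at this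
    nlinarith
  have hqnorm : ‖q‖ ≤ 1 := q.opNorm_le_bound zero_le_one (fun x => by simpa using hq1 x)
  -- composing with q is an isometry on duals
  have hcomp_le : ∀ φ : Y →L[ℝ] ℝ, ‖φ.comp q‖ ≤ ‖φ‖ := fun φ =>
    le_trans (φ.opNorm_comp_le q) (by
      calc ‖φ‖ * ‖q‖ ≤ ‖φ‖ * 1 := mul_le_mul_of_nonneg_left hqnorm (norm_nonneg _)
      _ = ‖φ‖ := mul_one _)
  have hcomp_ge : ∀ φ : Y →L[ℝ] ℝ, ‖φ‖ ≤ ‖φ.comp q‖ := by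
    intro φ
    refine φ.opNorm_le_bound (norm_nonneg _) fun y => ?_
    set C := ‖φ.comp q‖ with hC
    have hC0 : 0 ≤ C := norm_nonneg _
    refine le_of_forall_pos_le_add fun ε hε => ?_
    set ε' : ℝ := ε / (C + 1) with hε'
    have hε'pos : 0 < ε' := by positivity
    have hpos : 0 < ‖y‖ + ε' := by positivity
    have hy' : (‖y‖ + ε')⁻¹ • y ∈ ball (0 : Y) 1 := by
      rw [mem_ball_zero_iff, norm_smul, norm_inv, Real.norm_of_nonneg hpos.le]
      rw [inv_mul_lt_iff₀ hpos]; linarith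
    rw [← hq] at hy'
    obtain ⟨x, hx, hxy⟩ := hy'
    have hxnorm : ‖x‖ < 1 := mem_ball_zero_iff.mp hx
    have h1 : |φ ((‖y‖ + ε')⁻¹ • y)| ≤ C := by
      rw [← hxy]
      calc |φ (q x)| = |(φ.comp q) x| := rfl
      _ ≤ C * ‖x‖ := by simpa using (φ.comp q).le_opNorm x
      _ ≤ C * 1 := mul_le_mul_of_nonneg_left hxnorm.le hC0
      _ = C := mul_one _
    rw [map_smul, smul_eq_mul, abs_mul, abs_inv, abs_of_pos hpos,
      inv_mul_le_iff₀ hpos] at h1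
    calc |φ y| ≤ (‖y‖ + ε') * C := h1
    _ = C * ‖y‖ + C * ε' := by ring
    _ ≤ C * ‖y‖ + (C + 1) * ε' := by nlinarith
    _ = C * ‖y‖ + ε := by
      have hC1 : C + 1 ≠ 0 := by positivity
      rw [hε']; field_simp
  have hnorm : ∀ φ : Y →L[ℝ] ℝ, ‖φ.comp q‖ = ‖φ‖ := fun φ =>
    le_antisymm (hcomp_le φ) (hcomp_ge φ)
  -- the isometric embedding of duals
  let ι : (Y →L[ℝ] ℝ) →ₗᵢ[ℝ] (X →L[ℝ] ℝ) :=
    ⟨{ toFun := fun φ => φ.comp q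
       map_add' := fun a b => by ext x; simp
       map_smul' := fun r a => by ext x; simp }, hnorm⟩
  set f : ℕ → X →L[ℝ] ℝ := fun n => (g n).comp q with hf
  have hMf : ∀ n, ‖f n‖ ≤ M := fun n => (hnorm (g n)) ▸ hMg n
  have hfb : Bornology.IsBounded (Set.range f) := by
    rw [isBounded_iff_forall_norm_le]
    exact ⟨M, by rintro _ ⟨n, rfl⟩; exact hMf n⟩
  -- pointwise bounds
  have hboundX : ∀ F : (closedBall (0 : (X →L[ℝ] ℝ) →L[ℝ] ℝ) 1),
      (⨅ n : ℕ, ⨆ p : {p : ℕ × ℕ // n ≤ p.1 ∧ n ≤ p.2},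
        |F.1 (f p.1.1) - F.1 (f p.1.2)|) ≤ 2 * M := by
    intro F
    refine auxInf_le (fun k => F.1 (f k)) fun k => ?_
    have hF : ‖F.1‖ ≤ 1 := norm_le_of_mem_cb (E := (X →L[ℝ] ℝ) →L[ℝ] ℝ) F.2
    calc |F.1 (f k)| ≤ ‖F.1‖ * ‖f k‖ := F.1.le_opNorm _
    _ ≤ 1 * M := mul_le_mul hF (hMf k) (norm_nonneg _) zero_le_one
    _ = M := one_mul _
  have hboundY : ∀ y : (closedBall (0 : Y) 1),
      (⨅ n : ℕ, ⨆ p : {p : ℕ × ℕ // n ≤ p.1 ∧ n ≤ p.2},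
        |g p.1.1 y.1 - g p.1.2 y.1|) ≤ 2 * M := by
    intro y
    refine auxInf_le (fun k => g k y.1) fun k => ?_
    have hy : ‖y.1‖ ≤ 1 := mem_closedBall_zero_iff.mp y.2
    calc |g k y.1| ≤ ‖g k‖ * ‖y.1‖ := (g k).le_opNorm _
    _ ≤ M * 1 := mul_le_mul (hMg k) hy (norm_nonneg _) hM0
    _ = M := mul_one _
  -- Step 1 : deltaW g ≤ deltaW f
  have step1 : deltaW g ≤ deltaW f := by
    rw [deltaW, deltaW]
    refine Real.iSup_le (fun G => ?_) (Real.iSup_nonneg fun F => auxInf_nonneg (fun k => F.1 (f k)))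
    -- Hahn-Banach extension
    obtain ⟨F, key0, hFle⟩ := extend_of_isometry ι G.1
    have hG1 : ‖G.1‖ ≤ 1 := norm_le_of_mem_cb (E := (Y →L[ℝ] ℝ) →L[ℝ] ℝ) G.2
    have hFball : F ∈ closedBall (0 : (X →L[ℝ] ℝ) →L[ℝ] ℝ) 1 :=
      mem_cb_of_norm_le (E := (X →L[ℝ] ℝ) →L[ℝ] ℝ) (le_trans hFle hG1)
    have key : ∀ n, F (f n) = G.1 (g n) := fun n => key0 (g n)
    have heq : (⨅ n : ℕ, ⨆ p : {p : ℕ × ℕ // n ≤ p.1 ∧ n ≤ p.2},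
        |G.1 (g p.1.1) - G.1 (g p.1.2)|)
        = ⨅ n : ℕ, ⨆ p : {p : ℕ × ℕ // n ≤ p.1 ∧ n ≤ p.2},
        |F (f p.1.1) - F (f p.1.2)| := by
      simp_rw [key]
    rw [heq]
    exact le_ciSup ⟨2 * M, by rintro _ ⟨F', rfl⟩; exact hboundX F'⟩
      (⟨F, hFball⟩ : closedBall (0 : (X →L[ℝ] ℝ) →L[ℝ] ℝ) 1)
  -- Step 2
  have step2 : deltaW f ≤ c * deltaWStar f := hX f hfb
  -- Step 3 : deltaWStar f ≤ deltaWStar g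
  have step3 : deltaWStar f ≤ deltaWStar g := by
    rw [deltaWStar, deltaWStar]
    refine Real.iSup_le (fun x => ?_) (Real.iSup_nonneg fun y => auxInf_nonneg (fun k => g k y.1))
    have hx : ‖x.1‖ ≤ 1 := mem_closedBall_zero_iff.mp x.2
    have hqx : q x.1 ∈ closedBall (0 : Y) 1 :=
      mem_closedBall_zero_iff.mpr (le_trans (hq1 x.1) hx)
    have heq : (⨅ n : ℕ, ⨆ p : {p : ℕ × ℕ // n ≤ p.1 ∧ n ≤ p.2},
        |f p.1.1 x.1 - f p.1.2 x.1|)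
        = ⨅ n : ℕ, ⨆ p : {p : ℕ × ℕ // n ≤ p.1 ∧ n ≤ p.2},
        |g p.1.1 (q x.1) - g p.1.2 (q x.1)| := rfl
    rw [heq]
    exact le_ciSup ⟨2 * M, by rintro _ ⟨y, rfl⟩; exact hboundY y⟩
      (⟨q x.1, hqx⟩ : closedBall (0 : Y) 1)
  calc deltaW g ≤ deltaW f := step1
  _ ≤ c * deltaWStar f := step2
  _ ≤ c * deltaWStar g := mul_le_mul_of_nonneg_left step3 (le_trans zero_le_one hc)
end

section
/- Let X be a separable nonreflexive Banach space and c ≥ 1. Then X is not c-Grothendieck. -/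
open Filter Metric Topology


theorem subspace_exists_lt_apply_of_lt_opNorm {E : Type*} [NormedAddCommGroup E] [NormedSpace ℝ E]
    (p : Subspace ℝ E) (f : StrongDual ℝ p) {r : ℝ} (hr : r < ‖f‖) :
    ∃ x : p, ‖x‖ < 1 ∧ r < ‖f x‖ :=
  f.exists_lt_apply_of_lt_opNorm hr

open NormedSpace in
/-- Key step: approximate annihilators of finite sets still see a functional far
from the range of the canonical embedding. -/
theorem exists_vanishing_functional {X : Type*} [NormedAddCommGroup X] [NormedSpace ℝ X]
    (F₀ : (X →L[ℝ] ℝ) →L[ℝ] ℝ) {r : ℝ}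
    (hr : r ≤ infDist F₀ (Set.range (inclusionInDoubleDual ℝ X))) (hrpos : 0 < r)
    (d : ℕ → X) (n : ℕ) :
    ∃ f : X →L[ℝ] ℝ, ‖f‖ ≤ 1 ∧ (∀ i < n, f (d i) = 0) ∧ r / 2 < |F₀ f| := by
  let L : Fin n → (X →L[ℝ] ℝ) →ₗ[ℝ] ℝ := fun i => (inclusionInDoubleDual ℝ X (d i)).toLinearMap
  have hLapp : ∀ (i : Fin n) (f : X →L[ℝ] ℝ), L i f = f (d i) := fun i f => rfl
  let Z : Submodule ℝ (X →L[ℝ] ℝ) := ⨅ i : Fin n, LinearMap.ker (L i)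
  let rest : Z →L[ℝ] ℝ := F₀.comp Z.subtypeL
  obtain ⟨g, hgext, hgnorm⟩ := exists_extension_norm_eq Z rest
  -- F₀ - g vanishes on Z, hence is a combination of the evaluations at `d i`
  have hker : (⨅ i : Fin n, LinearMap.ker (L i)) ≤ LinearMap.ker (F₀ - g).toLinearMap := by
    intro x hx
    have hgx : g x = F₀ x := hgext ⟨x, hx⟩
    have : (F₀ - g).toLinearMap x = F₀ x - g x := rfl
    rw [LinearMap.mem_ker, this, hgx, sub_self]
  obtain ⟨c, hc⟩ := (Submodule.mem_span_range_iff_exists_fun ℝ).1 (mem_span_of_iInf_ker_le_ker hker)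
  set y : X := ∑ i, c i • d i with hy
  have happ : ∀ f' : X →L[ℝ] ℝ, F₀ f' - g f' = f' y := by
    intro f'
    have h1 := LinearMap.congr_fun hc f'
    have h2 : (∑ i, c i • L i) f' = ∑ i, c i * f' (d i) := by
      rw [LinearMap.sum_apply]
      exact Finset.sum_congr rfl fun i _ => by rw [LinearMap.smul_apply, hLapp, smul_eq_mul]
    have h3 : (F₀ - g).toLinearMap f' = F₀ f' - g f' := rfl
    rw [h2, h3] at h1
    have h4 : f' y = ∑ i, c i * f' (d i) := by
      rw [hy, map_sum]
      exact Finset.sum_congr rfl fun i _ => by rw [map_smul, smul_eq_mul]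
    rw [h4, ← h1]
  have hjy : F₀ - inclusionInDoubleDual ℝ X y = g := by
    ext f'
    have h5 : (F₀ - inclusionInDoubleDual ℝ X y) f' = F₀ f' - f' y := rfl
    rw [h5, ← happ f']
    ring
  have hnorm : r ≤ ‖g‖ := by
    calc r ≤ infDist F₀ (Set.range (inclusionInDoubleDual ℝ X)) := hr
    _ ≤ dist F₀ (inclusionInDoubleDual ℝ X y) := infDist_le_dist_of_mem ⟨y, rfl⟩
    _ = ‖F₀ - inclusionInDoubleDual ℝ X y‖ := by exact dist_eq_norm F₀ (inclusionInDoubleDual ℝ X y)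
    _ = ‖g‖ := by rw [hjy]
  have hhalf : r / 2 < ‖g‖ := lt_of_lt_of_le (by linarith) hnorm
  obtain ⟨z, hz1, hz2⟩ := subspace_exists_lt_apply_of_lt_opNorm Z rest (lt_of_lt_of_eq hhalf hgnorm)
  refine ⟨(z : X →L[ℝ] ℝ), le_of_lt hz1, ?_, ?_⟩
  · intro i hi
    have hmem : (z : X →L[ℝ] ℝ) ∈ ⨅ i : Fin n, LinearMap.ker (L i) := z.2
    have := (Submodule.mem_iInf _).1 hmem ⟨i, hi⟩
    rw [LinearMap.mem_ker, hLapp] at this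
    exact this
  · have h6 : rest z = F₀ (z : X →L[ℝ] ℝ) := rfl
    rw [h6, Real.norm_eq_abs] at hz2
    exact hz2

/-- A separable nonreflexive Banach space is not `c`-Grothendieck for any `c ≥ 1`. -/
theorem not_isCGrothendieck_of_separable_nonreflexive {X : Type*} [NormedAddCommGroup X]
    [NormedSpace ℝ X] [CompleteSpace X] [TopologicalSpace.SeparableSpace X]
    (hnonrefl : ¬ Function.Surjective (NormedSpace.inclusionInDoubleDual ℝ X))
    (c : ℝ) (hc : 1 ≤ c) :
    ¬ IsCGrothendieck c X := by
  classical
  have hXne : Nonempty X := ⟨0⟩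
  obtain ⟨d, hd⟩ := TopologicalSpace.exists_dense_seq X
  -- pick F outside the range of the double dual embedding, normalize it
  rw [Function.Surjective] at hnonrefl
  push_neg at hnonrefl
  obtain ⟨F, hF⟩ := hnonrefl
  have hFne : F ≠ 0 := fun h => hF 0 (by simp [h])
  have hFnorm : (0 : ℝ) < ‖F‖ := (norm_pos_iff (a := F)).mpr hFne
  set F₀ : (X →L[ℝ] ℝ) →L[ℝ] ℝ := ‖F‖⁻¹ • F with hF₀
  have hF₀norm : ‖F₀‖ = 1 := by
    have h : ‖F₀‖ = ‖(‖F‖⁻¹ : ℝ)‖ * ‖F‖ := by rw [hF₀]; exact @norm_smul _ _ _ _ _ NormedSpace.toNormSMulClass ‖F‖⁻¹ F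
    rw [h, norm_inv, Real.norm_of_nonneg (norm_nonneg F), inv_mul_cancel₀ (ne_of_gt hFnorm)]
  have hF₀notmem : F₀ ∉ Set.range (NormedSpace.inclusionInDoubleDual ℝ X) := by
    rintro ⟨x, hx⟩
    exact hF (‖F‖ • x) (by rw [map_smul, hx, hF₀, smul_smul,
      mul_inv_cancel₀ (ne_of_gt hFnorm), one_smul])
  have hclosed : IsClosed (Set.range (NormedSpace.inclusionInDoubleDual ℝ X)) := by
    have hiso : Isometry (NormedSpace.inclusionInDoubleDual ℝ X) :=
      (NormedSpace.inclusionInDoubleDualLi ℝ (E := X)).isometry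
    exact hiso.isClosedEmbedding.isClosed_range
  set r : ℝ := infDist F₀ (Set.range (NormedSpace.inclusionInDoubleDual ℝ X)) with hrdef
  have hrpos : 0 < r := by
    rw [hrdef]
    exact (hclosed.notMem_iff_infDist_pos
      (⟨NormedSpace.inclusionInDoubleDual ℝ X 0, 0, rfl⟩ :
        (Set.range (NormedSpace.inclusionInDoubleDual ℝ X)).Nonempty)).1 hF₀notmem
  -- a sequence of approximately-annihilating functionals
  have key : ∀ n, ∃ f : X →L[ℝ] ℝ, ‖f‖ ≤ 1 ∧ (∀ i < n, f (d i) = 0) ∧ r / 2 < |F₀ f| :=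
    fun n => exists_vanishing_functional F₀ hrdef.le hrpos d n
  choose f hf1 hf2 hf3 using key
  -- interlace with zeros
  set g : ℕ → X →L[ℝ] ℝ := fun n => if Even n then f n else 0 with hg
  have hgnorm : ∀ n, ‖g n‖ ≤ 1 := by
    intro n
    by_cases h : Even n <;> simp [hg, h, hf1 n]
  have hgeven : ∀ n, g (2 * n) = f (2 * n) := fun n => if_pos (even_two_mul n)
  have hgodd : ∀ n, g (2 * n + 1) = 0 := by
    intro n
    refine if_neg ?_
    rw [Nat.even_add_one, not_not]
    exact even_two_mul n
  have hbd : Bornology.IsBounded (Set.range g) := by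
    apply (Metric.isBounded_closedBall (x := (0 : X →L[ℝ] ℝ)) (r := 1)).subset
    rintro _ ⟨n, rfl⟩
    rw [Metric.mem_closedBall]
    have h3 : dist (g n) (0 : X →L[ℝ] ℝ) = ‖g n‖ := by exact dist_zero_right (g n)
    exact h3.trans_le (hgnorm n)
  intro hG
  have hmain := hG g hbd
  -- deltaWStar g ≤ 0
  have hws : deltaWStar g ≤ 0 := by
    apply Real.iSup_nonpos
    rintro ⟨x, hx⟩
    have hx1 : ‖x‖ ≤ 1 := mem_closedBall_zero_iff.1 hx
    by_contra hcon
    push_neg at hcon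
    set A := (⨅ n : ℕ, ⨆ p : {p : ℕ × ℕ // n ≤ p.1 ∧ n ≤ p.2},
        |g p.1.1 x - g p.1.2 x|) with hA
    obtain ⟨i, hi⟩ := hd.exists_dist_lt x (by positivity : (0:ℝ) < A / 4)
    have hsmall : ∀ m, i < m → |g m x| ≤ A / 4 := by
      intro m him
      by_cases h : Even m
      · have hgm : g m = f m := if_pos h
        have hz : g m (d i) = 0 := by rw [hgm]; exact hf2 m i him
        have hgx : g m x = g m (x - d i) := by rw [map_sub, hz, sub_zero]
        rw [hgx, ← Real.norm_eq_abs]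
        calc ‖g m (x - d i)‖ ≤ ‖g m‖ * ‖x - d i‖ := (g m).le_opNorm _
        _ ≤ 1 * (A / 4) := by
            apply mul_le_mul (hgnorm m) _ (norm_nonneg _) zero_le_one
            rw [← dist_eq_norm]
            exact le_of_lt hi
        _ = A / 4 := one_mul _
      · have hgm : g m = 0 := if_neg h
        rw [hgm]
        simp only [ContinuousLinearMap.zero_apply, abs_zero]
        positivity
    have hAle : A ≤ A / 2 := by
      have hbb : BddBelow (Set.range fun n : ℕ => ⨆ p : {p : ℕ × ℕ // n ≤ p.1 ∧ n ≤ p.2},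
          |g p.1.1 x - g p.1.2 x|) := by
        refine ⟨0, ?_⟩
        rintro _ ⟨n, rfl⟩
        exact Real.iSup_nonneg fun p => abs_nonneg _
      refine le_trans (hA ▸ ciInf_le hbb (i + 1)) ?_
      apply Real.iSup_le _ (by positivity)
      rintro ⟨⟨k, l⟩, hk, hl⟩
      have h1 : |g k x| ≤ A / 4 := hsmall k (by omega)
      have h2 : |g l x| ≤ A / 4 := hsmall l (by omega)
      calc |g k x - g l x| ≤ |g k x| + |g l x| := abs_sub _ _
      _ ≤ A / 2 := by linarith
    linarith
  -- deltaW g ≥ r / 2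
  have habs : ∀ (F' : (X →L[ℝ] ℝ) →L[ℝ] ℝ), ‖F'‖ ≤ 1 → ∀ k l : ℕ,
      |F' (g k) - F' (g l)| ≤ 2 := by
    intro F' hF' k l
    have h1 : ∀ m, |F' (g m)| ≤ 1 := by
      intro m
      rw [← Real.norm_eq_abs]
      calc ‖F' (g m)‖ ≤ ‖F'‖ * ‖g m‖ := F'.le_opNorm _
      _ ≤ 1 * 1 := mul_le_mul hF' (hgnorm m) (norm_nonneg _) zero_le_one
      _ = 1 := one_mul _
    calc |F' (g k) - F' (g l)| ≤ |F' (g k)| + |F' (g l)| := abs_sub _ _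
    _ ≤ 2 := by linarith [h1 k, h1 l]
  have hw : r / 2 ≤ deltaW g := by
    have hbdd : BddAbove (Set.range fun F' : (closedBall (0 : (X →L[ℝ] ℝ) →L[ℝ] ℝ) 1) =>
        ⨅ n : ℕ, ⨆ p : {p : ℕ × ℕ // n ≤ p.1 ∧ n ≤ p.2},
          |F'.1 (g p.1.1) - F'.1 (g p.1.2)|) := by
      refine ⟨2, ?_⟩
      rintro _ ⟨F', rfl⟩
      have hF1 : ‖F'.1‖ ≤ 1 := by
        have h2 : dist F'.1 (0 : (X →L[ℝ] ℝ) →L[ℝ] ℝ) ≤ 1 := F'.2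
        have h3 : dist F'.1 (0 : (X →L[ℝ] ℝ) →L[ℝ] ℝ) = ‖F'.1‖ := by
          exact dist_zero_right F'.1
        exact (le_of_eq h3.symm).trans h2
      have hbb : BddBelow (Set.range fun n : ℕ => ⨆ p : {p : ℕ × ℕ // n ≤ p.1 ∧ n ≤ p.2},
          |F'.1 (g p.1.1) - F'.1 (g p.1.2)|) := by
        refine ⟨0, ?_⟩
        rintro _ ⟨n, rfl⟩
        exact Real.iSup_nonneg fun p => abs_nonneg _
      refine le_trans (ciInf_le hbb 0) ?_
      exact Real.iSup_le (fun p => habs F'.1 hF1 _ _) (by norm_num)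
    have hmem : F₀ ∈ closedBall (0 : (X →L[ℝ] ℝ) →L[ℝ] ℝ) 1 := by
      rw [Metric.mem_closedBall]
      have h3 : dist F₀ (0 : (X →L[ℝ] ℝ) →L[ℝ] ℝ) = ‖F₀‖ := by exact dist_zero_right F₀
      exact le_of_eq (h3.trans hF₀norm)
    refine le_trans ?_ (le_ciSup hbdd ⟨F₀, hmem⟩)
    apply le_ciInf
    intro n
    have hub : BddAbove (Set.range fun p : {p : ℕ × ℕ // n ≤ p.1 ∧ n ≤ p.2} =>
        |F₀ (g p.1.1) - F₀ (g p.1.2)|) := by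
      refine ⟨2, ?_⟩
      rintro _ ⟨p, rfl⟩
      exact habs F₀ (le_of_eq hF₀norm) _ _
    refine le_trans ?_ (le_ciSup hub ⟨(2 * n, 2 * n + 1), by omega, by omega⟩)
    simp only [hgeven, hgodd, map_zero, sub_zero]
    exact le_of_lt (hf3 (2 * n))
  -- contradiction
  have hcs : c * deltaWStar g ≤ 0 :=
    mul_nonpos_of_nonneg_of_nonpos (by linarith) hws
  linarith
end

section
/- Let q : X → Y be a quotient map between Banach spaces and (yₙ*) a bounded sequence in Y*. Then δ_w(q* yₙ*) = δ_w(yₙ*) and δ_{w*}(q* yₙ*) = δ_{w*}(yₙ*), where (q* yₙ*) is the corresponding sequence in X*. -/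
open Filter Metric Topology

/-- The oscillation-at-infinity of a real sequence. -/
noncomputable def osc (a : ℕ → ℝ) : ℝ :=
  ⨅ n : ℕ, ⨆ p : {p : ℕ × ℕ // n ≤ p.1 ∧ n ≤ p.2}, |a p.1.1 - a p.1.2|

theorem osc_bddAbove (a : ℕ → ℝ) (M : ℝ) (hM : ∀ k, |a k| ≤ M) (n : ℕ) :
    BddAbove (Set.range fun p : {p : ℕ × ℕ // n ≤ p.1 ∧ n ≤ p.2} =>
      |a p.1.1 - a p.1.2|) := by
  refine ⟨2 * M, ?_⟩
  rintro r ⟨p, rfl⟩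
  rw [abs_sub_le_iff]
  constructor <;> linarith [abs_le.mp (hM p.1.1), abs_le.mp (hM p.1.2)]

theorem osc_sup_nonneg (a : ℕ → ℝ) (M : ℝ) (hM : ∀ k, |a k| ≤ M) (n : ℕ) :
    0 ≤ ⨆ p : {p : ℕ × ℕ // n ≤ p.1 ∧ n ≤ p.2}, |a p.1.1 - a p.1.2| := by
  calc (0 : ℝ) = |a n - a n| := by simp
    _ ≤ _ := le_ciSup (osc_bddAbove a M hM n) ⟨(n, n), le_rfl, le_rfl⟩

theorem osc_nonneg (a : ℕ → ℝ) (M : ℝ) (hM : ∀ k, |a k| ≤ M) : 0 ≤ osc a :=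
  le_ciInf (osc_sup_nonneg a M hM)

theorem osc_le (a : ℕ → ℝ) (M : ℝ) (hM : ∀ k, |a k| ≤ M) : osc a ≤ 2 * M := by
  refine (ciInf_le ⟨0, ?_⟩ 0).trans ?_
  · rintro r ⟨n, rfl⟩
    exact osc_sup_nonneg a M hM n
  · haveI : Nonempty {p : ℕ × ℕ // 0 ≤ p.1 ∧ 0 ≤ p.2} := ⟨⟨(0, 0), le_rfl, le_rfl⟩⟩
    refine ciSup_le fun p => ?_
    rw [abs_sub_le_iff]
    constructor <;> linarith [abs_le.mp (hM p.1.1), abs_le.mp (hM p.1.2)]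

theorem osc_smul (a : ℕ → ℝ) (t : ℝ) (ht : 0 ≤ t) :
    osc (fun n => t * a n) = t * osc a := by
  unfold osc
  rw [Real.mul_iInf_of_nonneg ht]
  refine iInf_congr fun n => ?_
  rw [Real.mul_iSup_of_nonneg ht]
  refine iSup_congr fun p => ?_
  rw [← mul_sub, abs_mul, abs_of_nonneg ht]

theorem norm_le_one_of_mem_cb {E : Type*} [NormedAddCommGroup E] [NormedSpace ℝ E]
    (G : closedBall (0 : E →L[ℝ] ℝ) 1) : ‖G.1‖ ≤ 1 := by
  have h := G.2
  rw [Metric.mem_closedBall] at h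
  exact le_trans (le_of_eq (dist_zero_right G.1).symm) h

theorem mem_cb_of_norm_le_s13 {E : Type*} [NormedAddCommGroup E] [NormedSpace ℝ E]
    {G : E →L[ℝ] ℝ} (h : ‖G‖ ≤ 1) : G ∈ closedBall (0 : E →L[ℝ] ℝ) 1 := by
  rw [Metric.mem_closedBall]
  exact le_trans (le_of_eq (dist_zero_right G)) h

section Quotient

variable {X Y : Type*} [NormedAddCommGroup X] [NormedSpace ℝ X]
    [NormedAddCommGroup Y] [NormedSpace ℝ Y]
    (q : X →L[ℝ] Y)

theorem quot_norm_le (hq : q '' ball (0 : X) 1 = ball (0 : Y) 1) (x : X) : ‖q x‖ ≤ ‖x‖ := by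
  refine le_of_forall_gt fun r hr => ?_
  have hr0 : 0 < r := lt_of_le_of_lt (norm_nonneg x) hr
  have hx : r⁻¹ • x ∈ ball (0 : X) 1 := by
    rw [mem_ball_zero_iff, norm_smul, norm_inv, Real.norm_eq_abs, abs_of_pos hr0,
      inv_mul_lt_one₀ hr0]
    exact hr
  have hb : q (r⁻¹ • x) ∈ ball (0 : Y) 1 := by
    rw [← hq]; exact ⟨_, hx, rfl⟩
  rw [mem_ball_zero_iff, map_smul, norm_smul, norm_inv, Real.norm_eq_abs,
    abs_of_pos hr0, inv_mul_lt_one₀ hr0] at hb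
  exact hb

theorem quot_surj_ball (hq : q '' ball (0 : X) 1 = ball (0 : Y) 1) (y : Y) (hy : ‖y‖ < 1) :
    ∃ x : X, ‖x‖ < 1 ∧ q x = y := by
  have hb : y ∈ ball (0 : Y) 1 := mem_ball_zero_iff.mpr hy
  rw [← hq] at hb
  obtain ⟨x, hx, rfl⟩ := hb
  exact ⟨x, mem_ball_zero_iff.mp hx, rfl⟩

theorem quot_dual_iso (hq : q '' ball (0 : X) 1 = ball (0 : Y) 1) (h : Y →L[ℝ] ℝ) :
    ‖h.comp q‖ = ‖h‖ := by
  refine le_antisymm ?_ ?_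
  · refine ContinuousLinearMap.opNorm_le_bound _ (norm_nonneg h) fun x => ?_
    calc ‖h (q x)‖ ≤ ‖h‖ * ‖q x‖ := h.le_opNorm _
      _ ≤ ‖h‖ * ‖x‖ := mul_le_mul_of_nonneg_left (quot_norm_le q hq x) (norm_nonneg h)
  · refine ContinuousLinearMap.opNorm_le_bound _ (norm_nonneg _) fun y => ?_
    have key : ∀ s : ℝ, ‖y‖ < s → ‖h y‖ ≤ ‖h.comp q‖ * s := by
      intro s hs
      have hs0 : 0 < s := lt_of_le_of_lt (norm_nonneg y) hs
      have hsy : ‖s⁻¹ • y‖ < 1 := by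
        rw [norm_smul, norm_inv, Real.norm_eq_abs, abs_of_pos hs0,
          inv_mul_lt_one₀ hs0]
        exact hs
      obtain ⟨x, hx, hqx⟩ := quot_surj_ball q hq _ hsy
      have hyx : h y = s * (h.comp q) x := by
        rw [ContinuousLinearMap.comp_apply, hqx, map_smul, smul_eq_mul,
          ← mul_assoc, mul_inv_cancel₀ hs0.ne', one_mul]
      rw [hyx, norm_mul, Real.norm_eq_abs, abs_of_pos hs0, mul_comm]
      refine mul_le_mul ?_ le_rfl hs0.le (norm_nonneg _)
      calc ‖(h.comp q) x‖ ≤ ‖h.comp q‖ * ‖x‖ := ContinuousLinearMap.le_opNorm _ _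
        _ ≤ ‖h.comp q‖ * 1 := mul_le_mul_of_nonneg_left hx.le (norm_nonneg _)
        _ = ‖h.comp q‖ := mul_one _
    have hlim : Tendsto (fun s : ℝ => ‖h.comp q‖ * s) (nhdsWithin ‖y‖ (Set.Ioi ‖y‖))
        (nhds (‖h.comp q‖ * ‖y‖)) :=
      ((continuous_const.mul continuous_id).tendsto ‖y‖).mono_left nhdsWithin_le_nhds
    refine ge_of_tendsto hlim ?_
    filter_upwards [self_mem_nhdsWithin] with s hs
    exact key s hs

/-- Hahn–Banach extension through the adjoint of a quotient map. -/
theorem quot_dual_extension (hsurj : Function.Surjective q)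
    (hiso : ∀ h : Y →L[ℝ] ℝ, ‖h.comp q‖ = ‖h‖)
    (H : (Y →L[ℝ] ℝ) →L[ℝ] ℝ) :
    ∃ G : (X →L[ℝ] ℝ) →L[ℝ] ℝ, ‖G‖ ≤ ‖H‖ ∧ ∀ h : Y →L[ℝ] ℝ, G (h.comp q) = H h := by
  classical
  set Tlin : (Y →L[ℝ] ℝ) →ₗ[ℝ] (X →L[ℝ] ℝ) :=
    { toFun := fun h => h.comp q
      map_add' := fun h1 h2 => ContinuousLinearMap.add_comp h1 h2 q
      map_smul' := fun c h => ContinuousLinearMap.smul_comp c h q } with hTlin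
  have hTinj : Function.Injective Tlin := by
    intro h1 h2 hh
    ext y
    obtain ⟨x, rfl⟩ := hsurj y
    exact ContinuousLinearMap.ext_iff.mp hh x
  set e : (Y →L[ℝ] ℝ) ≃ₗ[ℝ] LinearMap.range Tlin := LinearEquiv.ofInjective Tlin hTinj with he
  set f0 : (LinearMap.range Tlin) →ₗ[ℝ] ℝ := H.toLinearMap.comp e.symm.toLinearMap with hf0
  have hsymm : ∀ h : Y →L[ℝ] ℝ, e.symm ⟨Tlin h, LinearMap.mem_range_self _ h⟩ = h := by
    intro h
    apply hTinj
    exact LinearEquiv.ofInjective_symm_apply (f := Tlin) (h := hTinj)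
      ⟨Tlin h, LinearMap.mem_range_self Tlin h⟩
  have hnorm : ∀ z : LinearMap.range Tlin, ‖e.symm z‖ = ‖z‖ := by
    rintro ⟨z, hz⟩
    obtain ⟨h, rfl⟩ := hz
    have h1 : (⟨Tlin h, LinearMap.mem_range_self _ h⟩ : LinearMap.range Tlin) =
        ⟨Tlin h, ⟨h, rfl⟩⟩ := rfl
    rw [← h1, hsymm h]
    have h2 : ‖(⟨Tlin h, LinearMap.mem_range_self _ h⟩ : LinearMap.range Tlin)‖
        = ‖Tlin h‖ := rfl
    rw [h2]
    exact (hiso h).symm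
  have hbound : ∀ z : LinearMap.range Tlin, ‖f0 z‖ ≤ ‖H‖ * ‖z‖ := by
    intro z
    calc ‖f0 z‖ = ‖H (e.symm z)‖ := rfl
      _ ≤ ‖H‖ * ‖e.symm z‖ := H.le_opNorm _
      _ = ‖H‖ * ‖z‖ := by rw [hnorm]
  set f : (LinearMap.range Tlin : Subspace ℝ (X →L[ℝ] ℝ)) →L[ℝ] ℝ :=
    LinearMap.mkContinuous f0 ‖H‖ (fun z => hbound z) with hf
  obtain ⟨G, hGext, hGnorm⟩ := exists_extension_norm_eq (LinearMap.range Tlin) f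
  refine ⟨G, ?_, ?_⟩
  · rw [hGnorm]
    exact LinearMap.mkContinuous_norm_le _ (norm_nonneg H) _
  · intro h
    have hmem : h.comp q ∈ LinearMap.range Tlin := LinearMap.mem_range_self _ h
    have h3 : G (h.comp q) = f ⟨h.comp q, hmem⟩ := hGext ⟨h.comp q, hmem⟩
    rw [h3]
    show H (e.symm ⟨Tlin h, LinearMap.mem_range_self _ h⟩) = H h
    rw [hsymm h]

end Quotient

/-- If `q : X → Y` is a quotient map between Banach spaces and `(g n)` is a bounded sequence
in `Y*`, then the sequence `(q* (g n)) = (g n ∘ q)` in `X*` satisfies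
`δ_w(q* g) = δ_w(g)` and `δ_{w*}(q* g) = δ_{w*}(g)`. -/
theorem deltaW_deltaWStar_comp_quotient {X Y : Type*} [NormedAddCommGroup X] [NormedSpace ℝ X]
    [CompleteSpace X] [NormedAddCommGroup Y] [NormedSpace ℝ Y] [CompleteSpace Y]
    (q : X →L[ℝ] Y) (hsurj : Function.Surjective q)
    (hq : q '' ball (0 : X) 1 = ball (0 : Y) 1)
    (g : ℕ → Y →L[ℝ] ℝ) (hg : Bornology.IsBounded (Set.range g)) :
    deltaW (fun n => (g n).comp q) = deltaW g ∧
      deltaWStar (fun n => (g n).comp q) = deltaWStar g := by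
  obtain ⟨C₀, hC₀⟩ := hg.exists_norm_le
  set C : ℝ := max C₀ 0 with hCdef
  have hC : ∀ n, ‖g n‖ ≤ C := fun n =>
    le_trans (hC₀ _ (Set.mem_range_self n)) (le_max_left _ _)
  have hC0 : 0 ≤ C := le_max_right _ _
  have hCq : ∀ n, ‖(g n).comp q‖ ≤ C := fun n => by rw [quot_dual_iso q hq]; exact hC n
  haveI hne1 : Nonempty (closedBall (0 : (X →L[ℝ] ℝ) →L[ℝ] ℝ) 1) :=
    ⟨⟨0, mem_closedBall_self zero_le_one⟩⟩
  haveI hne2 : Nonempty (closedBall (0 : (Y →L[ℝ] ℝ) →L[ℝ] ℝ) 1) :=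
    ⟨⟨0, mem_closedBall_self zero_le_one⟩⟩
  haveI hne3 : Nonempty (closedBall (0 : X) 1) := ⟨⟨0, mem_closedBall_self zero_le_one⟩⟩
  haveI hne4 : Nonempty (closedBall (0 : Y) 1) := ⟨⟨0, mem_closedBall_self zero_le_one⟩⟩
  -- weak part
  have hW : deltaW (fun n => (g n).comp q) = deltaW g := by
    have lhs_eq : deltaW (fun n => (g n).comp q) =
        ⨆ F : (closedBall (0 : (X →L[ℝ] ℝ) →L[ℝ] ℝ) 1),
          osc (fun n => F.1 ((g n).comp q)) := rfl
    have rhs_eq : deltaW g =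
        ⨆ G : (closedBall (0 : (Y →L[ℝ] ℝ) →L[ℝ] ℝ) 1),
          osc (fun n => G.1 (g n)) := rfl
    have hbddR : BddAbove (Set.range fun G : (closedBall (0 : (Y →L[ℝ] ℝ) →L[ℝ] ℝ) 1) =>
        osc (fun n => G.1 (g n))) := by
      refine ⟨2 * C, ?_⟩
      rintro r ⟨G, rfl⟩
      refine osc_le _ C fun k => ?_
      calc |G.1 (g k)| ≤ ‖G.1‖ * ‖g k‖ := G.1.le_opNorm _
        _ ≤ 1 * C := mul_le_mul (norm_le_one_of_mem_cb G) (hC k) (norm_nonneg _) zero_le_one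
        _ = C := one_mul _
    have hbddL : BddAbove (Set.range fun F : (closedBall (0 : (X →L[ℝ] ℝ) →L[ℝ] ℝ) 1) =>
        osc (fun n => F.1 ((g n).comp q))) := by
      refine ⟨2 * C, ?_⟩
      rintro r ⟨F, rfl⟩
      refine osc_le _ C fun k => ?_
      calc |F.1 ((g k).comp q)| ≤ ‖F.1‖ * ‖(g k).comp q‖ := F.1.le_opNorm _
        _ ≤ 1 * C := mul_le_mul (norm_le_one_of_mem_cb F) (hCq k) (norm_nonneg _) zero_le_one
        _ = C := one_mul _
    rw [lhs_eq, rhs_eq]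
    apply le_antisymm
    · refine ciSup_le fun F => ?_
      set Tlin : (Y →L[ℝ] ℝ) →ₗ[ℝ] (X →L[ℝ] ℝ) :=
        { toFun := fun h => h.comp q
          map_add' := fun h1 h2 => ContinuousLinearMap.add_comp h1 h2 q
          map_smul' := fun c h => ContinuousLinearMap.smul_comp c h q } with hTlin
      have hTb : ∀ h : Y →L[ℝ] ℝ, ‖Tlin h‖ ≤ 1 * ‖h‖ := fun h => by
        rw [one_mul]
        exact le_of_eq (quot_dual_iso q hq h)
      set Tc : (Y →L[ℝ] ℝ) →L[ℝ] (X →L[ℝ] ℝ) := LinearMap.mkContinuous Tlin 1 hTb with hTc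
      have hTcnorm : ‖Tc‖ ≤ 1 := LinearMap.mkContinuous_norm_le Tlin zero_le_one hTb
      have hGmem : F.1.comp Tc ∈ closedBall (0 : (Y →L[ℝ] ℝ) →L[ℝ] ℝ) 1 := by
        refine mem_cb_of_norm_le_s13 ?_
        calc ‖F.1.comp Tc‖ ≤ ‖F.1‖ * ‖Tc‖ := ContinuousLinearMap.opNorm_comp_le _ _
          _ ≤ 1 * 1 := mul_le_mul (norm_le_one_of_mem_cb F) hTcnorm (ContinuousLinearMap.opNorm_nonneg Tc) zero_le_one
          _ = 1 := one_mul _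
      have heq : osc (fun n => F.1 ((g n).comp q)) =
          osc (fun n => (F.1.comp Tc) (g n)) := rfl
      rw [heq]
      exact le_ciSup hbddR
        (⟨F.1.comp Tc, hGmem⟩ : (closedBall (0 : (Y →L[ℝ] ℝ) →L[ℝ] ℝ) 1))
    · refine ciSup_le fun Hd => ?_
      obtain ⟨G, hGn, hGe⟩ := quot_dual_extension q hsurj (quot_dual_iso q hq) Hd.1
      have hGmem : G ∈ closedBall (0 : (X →L[ℝ] ℝ) →L[ℝ] ℝ) 1 :=
        mem_cb_of_norm_le_s13 (le_trans hGn (norm_le_one_of_mem_cb Hd))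
      have heq : osc (fun n => Hd.1 (g n)) = osc (fun n => G ((g n).comp q)) := by
        refine congrArg osc ?_
        funext n
        exact (hGe (g n)).symm
      rw [heq]
      exact le_ciSup hbddL (⟨G, hGmem⟩ : (closedBall (0 : (X →L[ℝ] ℝ) →L[ℝ] ℝ) 1))
  -- weak* part
  have hWS : deltaWStar (fun n => (g n).comp q) = deltaWStar g := by
    have lhs_eq : deltaWStar (fun n => (g n).comp q) =
        ⨆ x : (closedBall (0 : X) 1), osc (fun n => g n (q x.1)) := rfl
    have rhs_eq : deltaWStar g =
        ⨆ y : (closedBall (0 : Y) 1), osc (fun n => g n y.1) := rfl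
    have hbR : ∀ y : Y, ‖y‖ ≤ 1 → ∀ k, |g k y| ≤ C := by
      intro y hy k
      calc |g k y| ≤ ‖g k‖ * ‖y‖ := (g k).le_opNorm _
        _ ≤ C * 1 := mul_le_mul (hC k) hy (norm_nonneg _) hC0
        _ = C := mul_one _
    have hbddR : BddAbove (Set.range fun y : (closedBall (0 : Y) 1) =>
        osc (fun n => g n y.1)) := by
      refine ⟨2 * C, ?_⟩
      rintro r ⟨y, rfl⟩
      exact osc_le _ C (hbR y.1 (by have := y.2; rwa [mem_closedBall_zero_iff] at this))
    have hbddL : BddAbove (Set.range fun x : (closedBall (0 : X) 1) =>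
        osc (fun n => g n (q x.1))) := by
      refine ⟨2 * C, ?_⟩
      rintro r ⟨x, rfl⟩
      have hx1 : ‖x.1‖ ≤ 1 := by have := x.2; rwa [mem_closedBall_zero_iff] at this
      exact osc_le _ C (hbR (q x.1) (le_trans (quot_norm_le q hq x.1) hx1))
    rw [lhs_eq, rhs_eq]
    apply le_antisymm
    · refine ciSup_le fun x => ?_
      have hx1 : ‖x.1‖ ≤ 1 := by have := x.2; rwa [mem_closedBall_zero_iff] at this
      have hqx : q x.1 ∈ closedBall (0 : Y) 1 := by
        rw [mem_closedBall_zero_iff]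
        exact le_trans (quot_norm_le q hq x.1) hx1
      exact le_ciSup hbddR (⟨q x.1, hqx⟩ : (closedBall (0 : Y) 1))
    · refine ciSup_le fun y => ?_
      have hy1 : ‖y.1‖ ≤ 1 := by have := y.2; rwa [mem_closedBall_zero_iff] at this
      set a : ℝ := osc (fun n => g n y.1) with ha
      have ha0 : 0 ≤ a := osc_nonneg _ C (hbR y.1 hy1)
      refine le_of_forall_pos_le_add fun ε hε => ?_
      set B : ℝ := ⨆ x : (closedBall (0 : X) 1), osc (fun n => g n (q x.1)) with hB
      set t : ℝ := max (1 - ε / (a + 1)) 0 with htdef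
      have ht0 : 0 ≤ t := le_max_right _ _
      have ht1 : t < 1 := by
        have h1 : 1 - ε / (a + 1) < 1 := by
          have : 0 < ε / (a + 1) := div_pos hε (by linarith)
          linarith
        exact max_lt h1 one_pos
      have hty : ‖t • y.1‖ < 1 := by
        rw [norm_smul, Real.norm_eq_abs, abs_of_nonneg ht0]
        calc t * ‖y.1‖ ≤ t * 1 := mul_le_mul_of_nonneg_left hy1 ht0
          _ = t := mul_one _
          _ < 1 := ht1
      obtain ⟨x, hx, hqx⟩ := quot_surj_ball q hq _ hty
      have hxmem : x ∈ closedBall (0 : X) 1 := by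
        rw [mem_closedBall_zero_iff]; exact hx.le
      have hval : osc (fun n => g n (q x)) = t * a := by
        rw [hqx]
        have h5 : (fun n => g n (t • y.1)) = fun n => t * (g n y.1) := by
          funext n; rw [map_smul, smul_eq_mul]
        rw [h5, osc_smul _ t ht0]
      have hle : t * a ≤ B := by
        rw [← hval]
        exact le_ciSup hbddL (⟨x, hxmem⟩ : (closedBall (0 : X) 1))
      have h2 : (1 - t) * a ≤ ε := by
        have h3 : 1 - t ≤ ε / (a + 1) := by
          have := le_max_left (1 - ε / (a + 1)) 0
          linarith
        have h4 : (1 - t) * a ≤ (ε / (a + 1)) * a :=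
          mul_le_mul_of_nonneg_right h3 ha0
        have h5 : (ε / (a + 1)) * a ≤ ε := by
          rw [div_mul_eq_mul_div, div_le_iff₀ (by linarith : (0:ℝ) < a + 1)]
          nlinarith
        linarith
      nlinarith [hle, h2]
  exact ⟨hW, hWS⟩
end

section
/- Let X be a Banach space, Y ⊆ X a subspace, x* ∈ X* with ‖x*‖ = 1 and x*|_Y = 0, x₀ ∈ X with x*(x₀) = 1, η ∈ (0,1], and c ≥ 1. Define B = { x ∈ X : ‖x − x*(x)x₀‖ ≤ 1 and |x*(x)| + dist(x − x*(x)x₀, Y) ≤ η/c }. Then B is a closed absolutely convex set satisfying (η/(c(2+‖x₀‖)))·B_X ⊆ B ⊆ (1 + η/c)‖x₀‖·B_X; in particular, B is the closed unit ball of an equivalent norm on X. -/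
open Filter Metric Topology Pointwise

/-- Let `X` be a Banach space, `Y ⊆ X` a subspace, `f ∈ X*` with `‖f‖ = 1` vanishing on `Y`,
`x₀ ∈ X` with `f x₀ = 1`, `η ∈ (0,1]` and `c ≥ 1`. Then the set
`B = {x : ‖x - f(x)x₀‖ ≤ 1 and |f(x)| + dist(x - f(x)x₀, Y) ≤ η/c}` is a closed absolutely
convex set (convex and balanced) with
`(η/(c(2+‖x₀‖))) B_X ⊆ B ⊆ (1+η/c)‖x₀‖ B_X`; in particular, it is the closed unit ball of
an equivalent norm on `X`. -/
theorem closed_absolutely_convex_body_renorming {X : Type*} [NormedAddCommGroup X]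
    [NormedSpace ℝ X] [CompleteSpace X] (Y : Submodule ℝ X)
    (f : X →L[ℝ] ℝ) (hf : ‖f‖ = 1) (hfY : ∀ y ∈ Y, f y = 0)
    (x₀ : X) (hx₀ : f x₀ = 1) (η : ℝ) (hη : η ∈ Set.Ioc (0 : ℝ) 1) (c : ℝ) (hc : 1 ≤ c)
    (B : Set X)
    (hB : B = {x : X | ‖x - f x • x₀‖ ≤ 1 ∧
      |f x| + infDist (x - f x • x₀) (Y : Set X) ≤ η / c}) :
    IsClosed B ∧ Convex ℝ B ∧ Balanced ℝ B ∧
      (η / (c * (2 + ‖x₀‖))) • closedBall (0 : X) 1 ⊆ B ∧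
      B ⊆ ((1 + η / c) * ‖x₀‖) • closedBall (0 : X) 1 ∧
      ∃ (p : Seminorm ℝ X) (a b : ℝ), 0 < a ∧ 0 < b ∧
        (∀ x : X, a * ‖x‖ ≤ p x ∧ p x ≤ b * ‖x‖) ∧ B = {x : X | p x ≤ 1} := by
  obtain ⟨hη0, hη1⟩ := hη
  have hc0 : (0 : ℝ) < c := lt_of_lt_of_le one_pos hc
  have hk : (0 : ℝ) < c / η := by positivity
  have hk1 : (1 : ℝ) ≤ c / η := (one_le_div hη0).2 (hη1.trans hc)
  set N := ‖x₀‖ with hNdef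
  have hN0 : (0 : ℝ) ≤ N := norm_nonneg _
  have hN1 : (1 : ℝ) ≤ N := by
    have := f.le_opNorm x₀
    rw [hf, one_mul, hx₀] at this
    simpa using this
  -- the continuous linear map x ↦ x - f x • x₀
  set G : X →L[ℝ] X := ContinuousLinearMap.id ℝ X - f.smulRight x₀ with hGdef
  have hG : ∀ x : X, G x = x - f x • x₀ := fun x => rfl
  have hfx : ∀ x : X, |f x| ≤ ‖x‖ := fun x => by
    have := f.le_opNorm x; rwa [hf, one_mul, Real.norm_eq_abs] at this
  have hGle : ∀ x : X, ‖G x‖ ≤ (1 + N) * ‖x‖ := by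
    intro x
    calc ‖G x‖ = ‖x - f x • x₀‖ := by rw [hG]
    _ ≤ ‖x‖ + ‖f x • x₀‖ := norm_sub_le _ _
    _ = ‖x‖ + |f x| * N := by rw [norm_smul, Real.norm_eq_abs]
    _ ≤ ‖x‖ + ‖x‖ * N := by nlinarith [hfx x]
    _ = (1 + N) * ‖x‖ := by ring
  have hdle : ∀ x : X, infDist (G x) (Y : Set X) ≤ ‖G x‖ := fun x => by
    simpa using infDist_le_dist_of_mem (Y.zero_mem)
  have hd0 : ∀ x : X, 0 ≤ infDist (G x) (Y : Set X) := fun x => infDist_nonneg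
  -- the seminorm
  set C : NNReal := ⟨c / η, le_of_lt hk⟩ with hCdef
  set p : Seminorm ℝ X :=
    (normSeminorm ℝ X).comp G.toLinearMap ⊔
      C • ((normSeminorm ℝ ℝ).comp (f : X →ₗ[ℝ] ℝ) +
        (normSeminorm ℝ (X ⧸ Y)).comp (Y.mkQ ∘ₗ G.toLinearMap)) with hpdef
  have hp : ∀ x : X, p x =
      max ‖G x‖ ((c / η) * (|f x| + infDist (G x) (Y : Set X))) := by
    intro x
    have hmk : ‖(Submodule.Quotient.mk (G x) : X ⧸ Y)‖ = infDist (G x) (Y : Set X) :=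
      QuotientAddGroup.norm_mk (G x)
    simp only [hpdef, Seminorm.sup_apply, Seminorm.smul_apply, Seminorm.add_apply,
      Seminorm.comp_apply, coe_normSeminorm, LinearMap.comp_apply,
      ContinuousLinearMap.coe_coe, Submodule.mkQ_apply, hmk, NNReal.smul_def, hCdef,
      ContinuousLinearMap.coe_coe, Real.norm_eq_abs, NNReal.coe_mk]
    congr 1
    rw [← hCdef, Seminorm.smul_apply, Seminorm.add_apply]
    simp only [Seminorm.comp_apply, coe_normSeminorm, LinearMap.comp_apply,
      ContinuousLinearMap.coe_coe, Submodule.mkQ_apply, hmk, NNReal.smul_def,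
      Real.norm_eq_abs, smul_eq_mul]
    rfl
  have key : ∀ s : ℝ, (c / η * s ≤ 1 ↔ s ≤ η / c) := by
    intro s
    rw [← le_div_iff₀' hk, one_div_div]
  have hBp : B = {x : X | p x ≤ 1} := by
    rw [hB]
    ext x
    simp only [Set.mem_setOf_eq, hp x, max_le_iff, hG, key]
  -- continuity / closedness
  have hcont1 : Continuous fun x : X => ‖x - f x • x₀‖ := by fun_prop
  have hcont2 : Continuous fun x : X =>
      |f x| + infDist (x - f x • x₀) (Y : Set X) := by
    apply Continuous.add
    · fun_prop
    · exact (continuous_infDist_pt (Y : Set X)).comp (by fun_prop)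
  have hclosed : IsClosed B := by
    rw [hB]
    exact (isClosed_le hcont1 continuous_const).inter (isClosed_le hcont2 continuous_const)
  -- convexity and balancedness via the seminorm
  have hBball : B = p.closedBall 0 1 := by
    rw [hBp]; ext x; simp [Seminorm.mem_closedBall_zero]
  refine ⟨hclosed, ?_, ?_, ?_, ?_, p, (1 + N)⁻¹, (c / η) * (2 + N), by positivity,
    by positivity, ?_, hBp⟩
  · rw [hBball]; exact p.convex_closedBall 0 1
  · rw [hBball]; exact p.balanced_closedBall_zero 1
  · -- small ball inclusion
    intro x hx
    set r : ℝ := η / (c * (2 + N)) with hrdef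
    have hr0 : 0 < r := by positivity
    rw [_root_.smul_closedBall _ _ zero_le_one, smul_zero, Real.norm_eq_abs,
      abs_of_pos hr0, mul_one, mem_closedBall_zero_iff] at hx
    rw [hB]
    constructor
    · have h1 : ‖x - f x • x₀‖ ≤ (1 + N) * r := by
        calc ‖x - f x • x₀‖ = ‖G x‖ := by rw [hG]
        _ ≤ (1 + N) * ‖x‖ := hGle x
        _ ≤ (1 + N) * r := by nlinarith
      have h2 : (1 + N) * r ≤ 1 := by
        rw [hrdef, show (1 + N) * (η / (c * (2 + N))) = ((1 + N) * η) / (c * (2 + N)) by ring,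
          div_le_one (by positivity)]
        nlinarith
      linarith
    · have h1 : |f x| + infDist (x - f x • x₀) (Y : Set X) ≤ (2 + N) * r := by
        have := hdle x
        have := hfx x
        have := hGle x
        rw [hG] at *
        nlinarith
      have h2 : (2 + N) * r = η / c := by
        rw [hrdef]; field_simp
      linarith [h1, h2.le]
  · -- big ball inclusion
    intro x hx
    rw [hB] at hx
    obtain ⟨h1, h2⟩ := hx
    have hR0 : (0 : ℝ) ≤ (1 + η / c) * N := by positivity
    rw [_root_.smul_closedBall _ _ zero_le_one, smul_zero, Real.norm_eq_abs,
      abs_of_nonneg hR0, mul_one, mem_closedBall_zero_iff]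
    have hfxb : |f x| ≤ η / c := by
      have := hd0 x; rw [hG] at this; linarith
    have : ‖x‖ ≤ 1 + (η / c) * N := by
      calc ‖x‖ = ‖(x - f x • x₀) + f x • x₀‖ := by congr 1; abel
      _ ≤ ‖x - f x • x₀‖ + ‖f x • x₀‖ := norm_add_le _ _
      _ = ‖x - f x • x₀‖ + |f x| * N := by rw [norm_smul, Real.norm_eq_abs]
      _ ≤ 1 + (η / c) * N := by nlinarith
    have hηc0 : 0 < η / c := by positivity
    nlinarith
  · -- norm equivalence
    intro x
    constructor
    · rw [inv_mul_le_iff₀ (by positivity)]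
      have hp1 : ‖G x‖ ≤ p x := by rw [hp]; exact le_max_left _ _
      have hp2 : c / η * (|f x| + infDist (G x) (Y : Set X)) ≤ p x := by
        rw [hp]; exact le_max_right _ _
      have hp0 : 0 ≤ p x := le_trans (norm_nonneg _) hp1
      have hfxp : |f x| ≤ p x := by nlinarith [hd0 x, abs_nonneg (f x)]
      have : ‖x‖ ≤ ‖G x‖ + |f x| * N := by
        calc ‖x‖ = ‖G x + f x • x₀‖ := by rw [hG]; congr 1; abel
        _ ≤ ‖G x‖ + ‖f x • x₀‖ := norm_add_le _ _
        _ = ‖G x‖ + |f x| * N := by rw [norm_smul, Real.norm_eq_abs]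
      nlinarith [abs_nonneg (f x)]
    · rw [hp]
      apply max_le
      · have hstep : (1 + N) ≤ c / η * (2 + N) := by nlinarith
        calc ‖G x‖ ≤ (1 + N) * ‖x‖ := hGle x
        _ ≤ c / η * (2 + N) * ‖x‖ := mul_le_mul_of_nonneg_right hstep (norm_nonneg x)
      · have := hGle x
        have := hdle x
        have := hfx x
        nlinarith [norm_nonneg x]
end

section
/- Let X be a Banach space, c ≥ 1, and suppose X is c-Grothendieck. Then for every z** ∈ (1/c)·B_{X**} and every sequence (xₙ*) in B_{X*}, one has limsup_{n→∞} z**(xₙ*) ≤ sup_{x ∈ B_X} limsup_{n→∞} xₙ*(x). -/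
open Filter Metric Topology

set_option maxHeartbeats 1000000 in
/-- If `X` is `c`-Grothendieck, then for every `z ∈ (1/c) · B_{X**}` and every sequence
`(ξ n)` in `B_{X*}` one has `limsup_n z (ξ n) ≤ sup_{x ∈ B_X} limsup_n (ξ n x)`. -/
theorem limsup_le_of_isCGrothendieck {X : Type*} [NormedAddCommGroup X] [NormedSpace ℝ X]
    [CompleteSpace X] (c : ℝ) (hc : 1 ≤ c) (hX : IsCGrothendieck c X)
    (z : (X →L[ℝ] ℝ) →L[ℝ] ℝ) (hz : ‖z‖ ≤ 1 / c)
    (ξ : ℕ → X →L[ℝ] ℝ) (hξ : ∀ n, ‖ξ n‖ ≤ 1) :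
    Filter.limsup (fun n => z (ξ n)) Filter.atTop ≤
      ⨆ x : (closedBall (0 : X) 1), Filter.limsup (fun n => ξ n x.1) Filter.atTop := by
  classical
  have hc0 : (0:ℝ) < c := lt_of_lt_of_le one_pos hc
  set S : ℝ := ⨆ x : (closedBall (0 : X) 1), Filter.limsup (fun n => ξ n x.1) Filter.atTop with hSdef
  set L : ℝ := Filter.limsup (fun n => z (ξ n)) Filter.atTop with hLdef
  set f : ℕ → X →L[ℝ] ℝ := fun m => if Even m then ξ (m/2) else -(ξ (m/2)) with hfdef
  have hfnorm : ∀ m, ‖f m‖ ≤ 1 := by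
    intro m
    by_cases h : Even m
    · simpa [hfdef, h] using hξ (m/2)
    · simpa [hfdef, h] using hξ (m/2)
  have hbdd : Bornology.IsBounded (Set.range f) := by
    refine (isBounded_closedBall (x := (0 : X →L[ℝ] ℝ)) (r := 1)).subset ?_
    rintro _ ⟨m, rfl⟩
    exact (mem_closedBall_zero_iff (E := X →L[ℝ] ℝ)).mpr (hfnorm m)
  have hfval : ∀ m (y : X), f m y = if Even m then ξ (m/2) y else -(ξ (m/2) y) := by
    intro m y
    by_cases h : Even m <;> simp [hfdef, h]
  have habsf : ∀ m (y : X), |f m y| = |ξ (m/2) y| := by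
    intro m y
    rw [hfval]
    split <;> simp
  -- basic bound on evaluations
  have heval : ∀ n (y : X), ‖y‖ ≤ 1 → |ξ n y| ≤ 1 := by
    intro n y hy
    calc |ξ n y| = ‖ξ n y‖ := (Real.norm_eq_abs _).symm
      _ ≤ ‖ξ n‖ * ‖y‖ := (ξ n).le_opNorm y
      _ ≤ 1 * 1 := by
          exact mul_le_mul (hξ n) hy (norm_nonneg _) (by linarith [hξ n, norm_nonneg (ξ n)])
      _ = 1 := by ring
  -- S bounds each limsup
  have hbound_each : ∀ x : (closedBall (0 : X) 1),
      Filter.limsup (fun n => ξ n x.1) Filter.atTop ≤ 1 := by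
    intro x
    have hx : ‖x.1‖ ≤ 1 := mem_closedBall_zero_iff.mp x.2
    refine Filter.limsup_le_of_le (Filter.isCoboundedUnder_le_of_le Filter.atTop
      (x := -1) (fun n => by have := heval n x.1 hx; rw [abs_le] at this; linarith [this.1])) ?_
    exact Filter.Eventually.of_forall fun n => by
      have := heval n x.1 hx; rw [abs_le] at this; exact this.2
  have hSbddAbove : BddAbove (Set.range fun x : (closedBall (0 : X) 1) =>
      Filter.limsup (fun n => ξ n x.1) Filter.atTop) := by
    refine ⟨1, ?_⟩
    rintro _ ⟨x, rfl⟩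
    exact hbound_each x
  have hSmem : ∀ y : X, ‖y‖ ≤ 1 → Filter.limsup (fun n => ξ n y) Filter.atTop ≤ S := by
    intro y hy
    exact le_ciSup hSbddAbove (⟨y, (mem_closedBall_zero_iff (E := X)).mpr hy⟩ :
      (closedBall (0 : X) 1))
  -- key2 : deltaWStar f ≤ 2 * S
  have key2 : deltaWStar f ≤ 2 * S := by
    rw [deltaWStar]
    haveI : Nonempty (closedBall (0 : X) 1) := ⟨⟨0, mem_closedBall_self zero_le_one⟩⟩
    refine ciSup_le ?_
    intro x
    have hx1 : ‖x.1‖ ≤ 1 := mem_closedBall_zero_iff.mp x.2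
    have hxneg : ‖-x.1‖ ≤ 1 := by simpa using hx1
    have hA : Filter.limsup (fun n => ξ n x.1) Filter.atTop ≤ S := hSmem x.1 hx1
    have hB : Filter.limsup (fun n => ξ n (-x.1)) Filter.atTop ≤ S := hSmem _ hxneg
    refine le_of_forall_pos_le_add ?_
    intro ε hε
    have hbddu : ∀ y : X, ‖y‖ ≤ 1 → Filter.IsBoundedUnder (· ≤ ·) Filter.atTop
        (fun n => ξ n y) := by
      intro y hy
      exact Filter.isBoundedUnder_of ⟨1, fun n => by
        have := heval n y hy; rw [abs_le] at this; exact this.2⟩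
    have h1 : ∀ᶠ n in Filter.atTop, ξ n x.1 < S + ε/2 :=
      Filter.eventually_lt_of_limsup_lt (lt_of_le_of_lt hA (by linarith)) (hbddu x.1 hx1)
    have h2 : ∀ᶠ n in Filter.atTop, ξ n (-x.1) < S + ε/2 :=
      Filter.eventually_lt_of_limsup_lt (lt_of_le_of_lt hB (by linarith)) (hbddu _ hxneg)
    obtain ⟨N, hN⟩ := Filter.eventually_atTop.mp (h1.and h2)
    have habs2 : ∀ m, N ≤ m → |ξ m x.1| ≤ S + ε/2 := by
      intro m hm
      rw [abs_le]
      constructor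
      · have := (hN m hm).2
        rw [map_neg] at this
        linarith
      · linarith [(hN m hm).1]
    haveI : Nonempty {p : ℕ × ℕ // 2*N ≤ p.1 ∧ 2*N ≤ p.2} :=
      ⟨⟨(2*N, 2*N), le_rfl, le_rfl⟩⟩
    have hlow : BddBelow (Set.range fun n : ℕ =>
        ⨆ p : {p : ℕ × ℕ // n ≤ p.1 ∧ n ≤ p.2}, |f p.1.1 x.1 - f p.1.2 x.1|) := by
      refine ⟨0, ?_⟩
      rintro _ ⟨n, rfl⟩
      exact Real.iSup_nonneg fun p => abs_nonneg _
    refine le_trans (ciInf_le hlow (2*N)) ?_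
    have : (⨆ p : {p : ℕ × ℕ // 2*N ≤ p.1 ∧ 2*N ≤ p.2},
        |f p.1.1 x.1 - f p.1.2 x.1|) ≤ 2*(S + ε/2) := by
      refine ciSup_le ?_
      rintro ⟨⟨k, l⟩, hk, hl⟩
      have hk2 : N ≤ k/2 := by omega
      have hl2 : N ≤ l/2 := by omega
      have e1 : |f k x.1| ≤ S + ε/2 := by rw [habsf]; exact habs2 _ hk2
      have e2 : |f l x.1| ≤ S + ε/2 := by rw [habsf]; exact habs2 _ hl2
      calc |f k x.1 - f l x.1| ≤ |f k x.1| + |f l x.1| := abs_sub _ _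
        _ ≤ 2*(S + ε/2) := by linarith
    linarith
  -- c • z is in the bidual ball
  have hcz : c • z ∈ closedBall (0 : (X →L[ℝ] ℝ) →L[ℝ] ℝ) 1 := by
    refine (mem_closedBall_zero_iff (E := (X →L[ℝ] ℝ) →L[ℝ] ℝ)).mpr ?_
    calc ‖c • z‖ ≤ ‖c‖ * ‖z‖ := ContinuousLinearMap.opNorm_smul_le c z
      _ = c * ‖z‖ := by rw [Real.norm_eq_abs, abs_of_pos hc0]
      _ ≤ c * (1/c) := mul_le_mul_of_nonneg_left hz hc0.le
      _ = 1 := by field_simp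
  have hfeven : ∀ k, f (2*k) = ξ k := by
    intro k
    have h1 : Even (2*k) := even_two_mul k
    have h2 : 2*k/2 = k := by omega
    simp [hfdef, h1, h2]
  have hfodd : ∀ k, f (2*k+1) = -(ξ k) := by
    intro k
    have h1 : ¬ Even (2*k+1) := by simp [Nat.even_add_one, Nat.even_mul]
    have h2 : (2*k+1)/2 = k := by omega
    simp [hfdef, h1, h2]
  -- key1 : 2*c*L ≤ deltaW f
  have hFbound : ∀ F : (closedBall (0 : (X →L[ℝ] ℝ) →L[ℝ] ℝ) 1), ∀ m, |F.1 (f m)| ≤ 1 := by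
    intro F m
    have hF : ‖F.1‖ ≤ 1 := (mem_closedBall_zero_iff (E := (X →L[ℝ] ℝ) →L[ℝ] ℝ)).mp F.2
    calc |F.1 (f m)| = ‖F.1 (f m)‖ := (Real.norm_eq_abs _).symm
      _ ≤ ‖F.1‖ * ‖f m‖ := F.1.le_opNorm _
      _ ≤ 1 * 1 := mul_le_mul hF (hfnorm m) (norm_nonneg _) (by linarith [norm_nonneg F.1])
      _ = 1 := by ring
  have key1 : 2*c*L ≤ deltaW f := by
    rw [deltaW]
    have hbddA : BddAbove (Set.range fun F : (closedBall (0 : (X →L[ℝ] ℝ) →L[ℝ] ℝ) 1) =>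
        ⨅ n : ℕ, ⨆ p : {p : ℕ × ℕ // n ≤ p.1 ∧ n ≤ p.2},
          |F.1 (f p.1.1) - F.1 (f p.1.2)|) := by
      refine ⟨2, ?_⟩
      rintro _ ⟨F, rfl⟩
      haveI : Nonempty {p : ℕ × ℕ // 0 ≤ p.1 ∧ 0 ≤ p.2} := ⟨⟨(0,0), le_rfl, le_rfl⟩⟩
      refine le_trans (ciInf_le ⟨0, ?_⟩ 0) (ciSup_le ?_)
      · rintro _ ⟨n, rfl⟩
        exact Real.iSup_nonneg fun p => abs_nonneg _
      · rintro ⟨⟨k, l⟩, -⟩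
        calc |F.1 (f k) - F.1 (f l)| ≤ |F.1 (f k)| + |F.1 (f l)| := abs_sub _ _
          _ ≤ 2 := by linarith [hFbound F k, hFbound F l]
    refine le_trans ?_ (le_ciSup hbddA (⟨c • z, hcz⟩ :
      (closedBall (0 : (X →L[ℝ] ℝ) →L[ℝ] ℝ) 1)))
    refine le_ciInf ?_
    intro n
    haveI : Nonempty {p : ℕ × ℕ // n ≤ p.1 ∧ n ≤ p.2} := ⟨⟨(n,n), le_rfl, le_rfl⟩⟩
    set T : ℝ := ⨆ p : {p : ℕ × ℕ // n ≤ p.1 ∧ n ≤ p.2},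
      |(c • z) (f p.1.1) - (c • z) (f p.1.2)| with hTdef
    have hTbddAbove : BddAbove (Set.range fun p : {p : ℕ × ℕ // n ≤ p.1 ∧ n ≤ p.2} =>
        |(c • z) (f p.1.1) - (c • z) (f p.1.2)|) := by
      refine ⟨2, ?_⟩
      rintro _ ⟨⟨⟨k, l⟩, -⟩, rfl⟩
      calc |(c • z) (f k) - (c • z) (f l)| ≤ |(c • z) (f k)| + |(c • z) (f l)| := abs_sub _ _
        _ ≤ 2 := by
            linarith [hFbound ⟨c • z, hcz⟩ k, hFbound ⟨c • z, hcz⟩ l]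
    have hT : ∀ k, n ≤ k → 2*c*(z (ξ k)) ≤ T := by
      intro k hk
      have hp : n ≤ 2*k ∧ n ≤ 2*k+1 := by omega
      have hle := le_ciSup hTbddAbove (⟨(2*k, 2*k+1), hp⟩ :
        {p : ℕ × ℕ // n ≤ p.1 ∧ n ≤ p.2})
      have heq : |(c • z) (f (2*k)) - (c • z) (f (2*k+1))| = |2*c*(z (ξ k))| := by
        rw [hfeven, hfodd]
        simp only [ContinuousLinearMap.smul_apply, map_neg, smul_eq_mul]
        congr 1
        ring
      calc 2*c*(z (ξ k)) ≤ |2*c*(z (ξ k))| := le_abs_self _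
        _ = |(c • z) (f (2*k)) - (c • z) (f (2*k+1))| := heq.symm
        _ ≤ T := hle
    have hLT : L ≤ T / (2*c) := by
      refine Filter.limsup_le_of_le (Filter.isCoboundedUnder_le_of_le Filter.atTop
        (x := -1) (fun m => ?_)) ?_
      · have : |z (ξ m)| ≤ 1 := by
          calc |z (ξ m)| = ‖z (ξ m)‖ := (Real.norm_eq_abs _).symm
            _ ≤ ‖z‖ * ‖ξ m‖ := z.le_opNorm _
            _ ≤ (1/c) * 1 := mul_le_mul hz (hξ m) (norm_nonneg _) (by positivity)
            _ ≤ 1 := by rw [mul_one]; exact div_le_one_of_le₀ hc (by positivity)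
        rw [abs_le] at this
        linarith [this.1]
      · refine Filter.eventually_atTop.mpr ⟨n, fun k hk => ?_⟩
        have := hT k hk
        rw [le_div_iff₀ (by positivity : (0:ℝ) < 2*c)]
        linarith
    calc 2*c*L ≤ 2*c*(T/(2*c)) := mul_le_mul_of_nonneg_left hLT (by positivity)
      _ = T := by field_simp
  have hdelta := hX f hbdd
  have hchain : 2*c*L ≤ c*(2*S) := by
    calc 2*c*L ≤ deltaW f := key1
      _ ≤ c * deltaWStar f := hdelta
      _ ≤ c * (2*S) := mul_le_mul_of_nonneg_left key2 hc0.le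
  nlinarith [hchain, hc0]
end
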